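/- arXiv:math/9904045 — 2 statements merged into one kernel-verified Lean document; each statement's English description precedes it below -/
import Mathlib

section
/- (Du) Suppose that for every j ∈ I one has bar(m'_j) = Σ_{i ∈ I, i ≤ j} a_{ij} m'_i with a_{ij} ∈ A and a_{jj} = 1. Then there exists a unique basis {c_i}_{i ∈ I} of the A⁻-module L such that bar(c_i) = c_i and π(c_i) = π(m'_i) for all i ∈ I. -/
/-! Common setup: Laurent polynomials, Coxeter combinatorics, the Hecke algebra and
its generalized Temperley–Lieb quotient, axiomatized via structures. -/

noncomputable section

open LaurentPolynomial Pointwise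

/-- The ring `A = ℤ[v,v⁻¹]` of Laurent polynomials over `ℤ`. -/
abbrev 𝔸 : Type := LaurentPolynomial ℤ

/-- The element `v`. -/
def vv : 𝔸 := LaurentPolynomial.T 1

/-- The element `v⁻¹`. -/
def vinv : 𝔸 := LaurentPolynomial.T (-1)

/-- The parameter `q = v²`. -/
def qpar : 𝔸 := LaurentPolynomial.T 2

/-- The element `q_c = v + v⁻¹`. -/
def qc : 𝔸 := vv + vinv

/-- The subset `ℤ[q] ⊆ A` of integer polynomials in `q = v²`. -/
def Zq : Set 𝔸 := Set.range fun p : Polynomial ℤ => Polynomial.aeval qpar p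

/-- The subset `v⁻¹ ℤ[v⁻¹] ⊆ A` of Laurent polynomials in which only strictly
negative powers of `v` occur. -/
def negA : Set 𝔸 := {a | ∃ p : Polynomial ℤ, a = vinv * Polynomial.aeval vinv p}

/-- The subring `A⁻ = ℤ[v⁻¹] ⊆ A`. -/
def Aneg : Subring 𝔸 := Subring.closure {vinv}

lemma vinv_mem_Aneg : vinv ∈ Aneg := Subring.subset_closure rfl

namespace TLpaper

variable {B W : Type} [Group W] {M : CoxeterMatrix B}

/-- `s` and `t` correspond to adjacent nodes of the Coxeter graph joined by a bond of
finite strength (recall that in a Coxeter matrix, `0` codes a bond of infinite strength). -/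
def AdjFin (M : CoxeterMatrix B) (s t : B) : Prop := 3 ≤ M s t

/-- The dihedral (standard parabolic) subgroup `⟨s,t⟩` of `W`, as a set. -/
def dih (cs : CoxeterSystem M W) (s t : B) : Set W :=
  (Subgroup.closure {cs.simple s, cs.simple t} : Subgroup W)

/-- The longest element `w_{st}` of the finite dihedral group `⟨s,t⟩`. -/
def wD (cs : CoxeterSystem M W) (s t : B) : W :=
  cs.wordProd (CoxeterSystem.alternatingWord s t (M s t))

/-- `w` is a complex element of `W`. -/
def IsComplex (cs : CoxeterSystem M W) (w : W) : Prop :=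
  ∃ s t x₁ x₂, AdjFin M s t ∧ w = x₁ * wD cs s t * x₂ ∧
    cs.length w = cs.length x₁ + cs.length (wD cs s t) + cs.length x₂

/-- `W_c`, the set of non-complex elements of `W`. -/
def Wc (cs : CoxeterSystem M W) : Set W := {w | ¬ IsComplex cs w}

/-- The Bruhat–Chevalley order on `W`: `x ≤ w` iff some reduced word for `w` has a
subword which is a word for `x`. -/
def bruhatLE (cs : CoxeterSystem M W) (x w : W) : Prop :=
  ∃ l : List B, cs.IsReduced l ∧ cs.wordProd l = w ∧
    ∃ l' : List B, l'.Sublist l ∧ cs.wordProd l' = x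

/-- The strict Bruhat–Chevalley order. -/
def bruhatLT (cs : CoxeterSystem M W) (x w : W) : Prop := bruhatLE cs x w ∧ x ≠ w

/-- The Hecke algebra of `(W,S)` over `A`: an associative unital `A`-algebra `H`
with a free `A`-basis `{T_w : w ∈ W}` satisfying the defining multiplication rules. -/
structure Hecke (cs : CoxeterSystem M W) (H : Type) [Ring H] [Algebra 𝔸 H] where
  TT : Module.Basis W 𝔸 H
  TT_one : TT 1 = 1
  TT_mul_gt : ∀ (s : B) (w : W), cs.length w < cs.length (cs.simple s * w) →
    TT (cs.simple s) * TT w = TT (cs.simple s * w)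
  TT_mul_lt : ∀ (s : B) (w : W), cs.length (cs.simple s * w) < cs.length w →
    TT (cs.simple s) * TT w = qpar • TT (cs.simple s * w) + (qpar - 1) • TT w

/-- The generators `Σ_{w ∈ ⟨s,t⟩} T_w` of the ideal `J(X)`. -/
def Jgens (cs : CoxeterSystem M W) {H : Type} [Ring H] [Algebra 𝔸 H]
    (h : Hecke cs H) : Set H :=
  {z | ∃ s t : B, AdjFin M s t ∧ z = ∑ᶠ w ∈ dih cs s t, h.TT w}

/-- The two-sided ideal `J(X)` of `H(X)`. -/
def Jideal (cs : CoxeterSystem M W) {H : Type} [Ring H] [Algebra 𝔸 H]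
    (h : Hecke cs H) : TwoSidedIdeal H :=
  TwoSidedIdeal.span (Jgens cs h)

/-- The generalized Temperley–Lieb algebra `TL(X) = H(X)/J(X)`, axiomatized as a
surjective `A`-algebra homomorphism `pr : H → TL` whose kernel is `J(X)`. -/
structure TLQuot (cs : CoxeterSystem M W) (H : Type) [Ring H] [Algebra 𝔸 H]
    (TL : Type) [Ring TL] [Algebra 𝔸 TL] (h : Hecke cs H) where
  pr : H →ₐ[𝔸] TL
  surj : Function.Surjective pr
  ker : ∀ x : H, pr x = 0 ↔ x ∈ Jideal cs h

end TLpaper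

namespace TLpaper

variable {B W : Type} [Group W] {M : CoxeterMatrix B}

/-- The bar involution on `TL(X)`: a ℤ-linear ring automorphism of order 2 sending
`v` to `v⁻¹` (equivalently, semilinear with respect to `T n ↦ T (-n)` on `A`) and
`t_w` to `(t_{w⁻¹})⁻¹`. -/
structure BarTL (TL : Type) [Ring TL] [Algebra 𝔸 TL] (t : W → TL) where
  bar : TL ≃+* TL
  invol : ∀ x : TL, bar (bar x) = x
  semi : ∀ (n : ℤ) (x : TL), bar ((LaurentPolynomial.T n : 𝔸) • x) = (LaurentPolynomial.T (-n) : 𝔸) • bar x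
  bar_t_mul : ∀ w : W, bar (t w) * t w⁻¹ = 1
  mul_bar_t : ∀ w : W, t w⁻¹ * bar (t w) = 1

/-- The element `b_s = v⁻¹ t_s + v⁻¹ t_e` of `TL(X)`. -/
def bgen (cs : CoxeterSystem M W) {TL : Type} [Ring TL] [Algebra 𝔸 TL]
    (t : W → TL) (s : B) : TL :=
  vinv • t (cs.simple s) + vinv • t 1

/-- The monomial `b_{s₁} b_{s₂} ⋯ b_{s_r}` attached to a word `s₁ s₂ ⋯ s_r`. -/
def bprod (cs : CoxeterSystem M W) {TL : Type} [Ring TL] [Algebra 𝔸 TL]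
    (t : W → TL) (l : List B) : TL :=
  (l.map (bgen cs t)).prod

/-- The element `m'_w = v^{-ℓ(w)} t_w` of `TL(X)`. -/
def mpr (cs : CoxeterSystem M W) {TL : Type} [Ring TL] [Algebra 𝔸 TL]
    (t : W → TL) (w : W) : TL :=
  (LaurentPolynomial.T (-(cs.length w : ℤ)) : 𝔸) • t w

/-- A Coxeter graph is simply laced if all its bonds have strength 2 or 3. -/
def SimplyLaced (M : CoxeterMatrix B) : Prop :=
  ∀ s t : B, s ≠ t → M s t = 2 ∨ M s t = 3

end TLpaper

namespace TLpaper

/-- Build a simply-laced Coxeter matrix from a symmetric, irreflexive adjacency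
relation: adjacent nodes get bond strength 3, non-adjacent distinct nodes get 2. -/
def ofAdj {B : Type} [DecidableEq B] (adj : B → B → Bool)
    (hsymm : ∀ i j, adj i j = adj j i) : CoxeterMatrix B where
  M := Matrix.of fun i j => if i = j then 1 else if adj i j then 3 else 2
  isSymm := by
    unfold Matrix.IsSymm
    ext i j
    simp only [Matrix.transpose_apply, Matrix.of_apply, hsymm i j]
    by_cases h : i = j
    · subst h; simp
    · rw [if_neg h, if_neg (Ne.symm h)]
  diagonal := by simp
  off_diagonal := by
    intro i j h
    simp only [Matrix.of_apply, h, if_false]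
    split <;> simp

/-- The Coxeter matrix of type `Aₙ`: a line of `n` nodes `0, 1, …, n-1`. -/
def AMat (n : ℕ) : CoxeterMatrix (Fin n) :=
  ofAdj (fun i j => decide (i.1 + 1 = j.1 ∨ j.1 + 1 = i.1))
    (by intro i j; simp only [decide_eq_decide]; tauto)

/-- The Coxeter matrix of type `Dₙ`: a line of nodes `1, …, n-1` together with a
node `0` joined only to node `2`. -/
def DMat (n : ℕ) : CoxeterMatrix (Fin n) :=
  ofAdj (fun i j => decide ((1 ≤ i.1 ∧ 1 ≤ j.1 ∧ (i.1 + 1 = j.1 ∨ j.1 + 1 = i.1)) ∨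
      (i.1 = 0 ∧ j.1 = 2) ∨ (j.1 = 0 ∧ i.1 = 2)))
    (by intro i j; simp only [decide_eq_decide]; tauto)

/-- The Coxeter matrix of type `Eₙ` (arbitrary rank): a line of nodes `1, …, n-1`
together with a node `0` joined only to node `3`. -/
def EMat (n : ℕ) : CoxeterMatrix (Fin n) :=
  ofAdj (fun i j => decide ((1 ≤ i.1 ∧ 1 ≤ j.1 ∧ (i.1 + 1 = j.1 ∨ j.1 + 1 = i.1)) ∨
      (i.1 = 0 ∧ j.1 = 3) ∨ (j.1 = 0 ∧ i.1 = 3)))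
    (by intro i j; simp only [decide_eq_decide]; tauto)

/-- A Coxeter matrix is of type `ADE` if, up to relabelling of the nodes, it is of
type `Aₙ` (n ≥ 1), `Dₙ` (n ≥ 4), or `Eₙ` (n ≥ 6, arbitrary rank). -/
def IsADE {B : Type} (M : CoxeterMatrix B) : Prop :=
  ∃ (n : ℕ) (e : B ≃ Fin n),
    (1 ≤ n ∧ ∀ i j, M i j = AMat n (e i) (e j)) ∨
    (4 ≤ n ∧ ∀ i j, M i j = DMat n (e i) (e j)) ∨
    (6 ≤ n ∧ ∀ i j, M i j = EMat n (e i) (e j))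

end TLpaper

namespace TLpaper

variable {B W : Type} [Group W] {M : CoxeterMatrix B}

/-- The image `t_w` of the basis element `T_w` in `TL(X)`. -/
def tElt (cs : CoxeterSystem M W) {H : Type} [Ring H] [Algebra 𝔸 H]
    {TL : Type} [Ring TL] [Algebra 𝔸 TL] (h : Hecke cs H) (tl : TLQuot cs H TL h) :
    W → TL := fun w => tl.pr (h.TT w)

/-- The `A⁻`-lattice `L ⊆ TL(X)` spanned by `{m'_w : w ∈ W_c}`. -/
def Lat (cs : CoxeterSystem M W) {H : Type} [Ring H] [Algebra 𝔸 H]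
    {TL : Type} [Ring TL] [Algebra 𝔸 TL] (h : Hecke cs H) (tl : TLQuot cs H TL h) :
    Submodule Aneg TL :=
  Submodule.span Aneg (Set.range fun w : {w : W // w ∈ Wc cs} => mpr cs (tElt cs h tl) w.1)

/-- The sublattice `v⁻¹L ⊆ L`; for `x, y ∈ L` one has `π(x) = π(y)` in `L/v⁻¹L`
if and only if `x - y ∈ v⁻¹L`. -/
def vinvLat (cs : CoxeterSystem M W) {H : Type} [Ring H] [Algebra 𝔸 H]
    {TL : Type} [Ring TL] [Algebra 𝔸 TL] (h : Hecke cs H) (tl : TLQuot cs H TL h) :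
    Submodule Aneg TL :=
  Submodule.span Aneg (vinv • (Lat cs h tl : Set TL))

/-- Connectivity of the Coxeter graph (in a simply laced graph, adjacency means a bond
of strength 3). -/
def ConnectedCG (M : CoxeterMatrix B) : Prop :=
  ∀ s t : B, Relation.ReflTransGen (fun a b => M a b = 3) s t

/-- The defining relations of the abstract generalized Temperley–Lieb algebra of a
simply laced Coxeter graph, imposed on the free `A`-algebra on the set of nodes. -/
inductive TLRel (M : CoxeterMatrix B) :
    FreeAlgebra 𝔸 B → FreeAlgebra 𝔸 B → Prop
  | sq (s : B) : TLRel M (FreeAlgebra.ι 𝔸 s * FreeAlgebra.ι 𝔸 s)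
      (algebraMap 𝔸 (FreeAlgebra 𝔸 B) qc * FreeAlgebra.ι 𝔸 s)
  | comm (s t : B) : M s t = 2 → TLRel M (FreeAlgebra.ι 𝔸 s * FreeAlgebra.ι 𝔸 t)
      (FreeAlgebra.ι 𝔸 t * FreeAlgebra.ι 𝔸 s)
  | braid (s t : B) : M s t = 3 →
      TLRel M (FreeAlgebra.ι 𝔸 s * FreeAlgebra.ι 𝔸 t * FreeAlgebra.ι 𝔸 s) (FreeAlgebra.ι 𝔸 s)

end TLpaper

namespace TLpaper

/-! ### Auxiliary scalar lemmas -/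

def NonposSupp (f : 𝔸) : Prop := ∀ n : ℤ, 0 < n → f.coeff n = 0
def NegSupp (f : 𝔸) : Prop := ∀ n : ℤ, 0 ≤ n → f.coeff n = 0

lemma NegSupp.nonpos {f : 𝔸} (h : NegSupp f) : NonposSupp f := fun n hn => h n hn.le
lemma NegSupp.zero : NegSupp (0 : 𝔸) := fun _ _ => rfl

lemma coeff_add (f g : 𝔸) (n : ℤ) : (f + g).coeff n = f.coeff n + g.coeff n := rfl
lemma coeff_neg (f : 𝔸) (n : ℤ) : (-f).coeff n = -(f.coeff n) := rfl
lemma coeff_sub (f g : 𝔸) (n : ℤ) : (f - g).coeff n = f.coeff n - g.coeff n := by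
  rw [sub_eq_add_neg, coeff_add, coeff_neg, sub_eq_add_neg]

lemma NegSupp.add {f g : 𝔸} (hf : NegSupp f) (hg : NegSupp g) : NegSupp (f + g) :=
  fun n hn => by rw [coeff_add, hf n hn, hg n hn, add_zero]

lemma coeff_T (k n : ℤ) : (T k : 𝔸).coeff n = if k = n then 1 else 0 := T_apply n k

lemma nonposSupp_T {k : ℤ} (hk : k ≤ 0) : NonposSupp (T k : 𝔸) := by
  intro n hn
  rw [coeff_T, if_neg (by omega)]

lemma nonposSupp_one : NonposSupp (1 : 𝔸) := by
  simpa using nonposSupp_T (le_refl (0 : ℤ))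

lemma NonposSupp.mul_neg {f g : 𝔸} (hf : NonposSupp f) (hg : NegSupp g) : NegSupp (f * g) := by
  intro n hn
  by_contra h
  have hmem : n ∈ (f * g).coeff.support := Finsupp.mem_support_iff.2 h
  have h2 := AddMonoidAlgebra.support_coeff_mul_subset f g hmem
  rw [Finset.mem_add] at h2
  obtain ⟨b, hb, c, hc, rfl⟩ := h2
  have hb' : b ≤ 0 := le_of_not_gt fun hb0 => (Finsupp.mem_support_iff.1 hb) (hf b hb0)
  have hc' : c < 0 := lt_of_not_ge fun hc0 => (Finsupp.mem_support_iff.1 hc) (hg c hc0)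
  omega

lemma neg_mul_nonpos {f g : 𝔸} (hf : NegSupp f) (hg : NonposSupp g) : NegSupp (f * g) := by
  intro n hn
  by_contra h
  have hmem : n ∈ (f * g).coeff.support := Finsupp.mem_support_iff.2 h
  have h2 := AddMonoidAlgebra.support_coeff_mul_subset f g hmem
  rw [Finset.mem_add] at h2
  obtain ⟨b, hb, c, hc, rfl⟩ := h2
  have hb' : b < 0 := lt_of_not_ge fun hb0 => (Finsupp.mem_support_iff.1 hb) (hf b hb0)
  have hc' : c ≤ 0 := le_of_not_gt fun hc0 => (Finsupp.mem_support_iff.1 hc) (hg c hc0)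
  omega

def Snonpos : Subring 𝔸 where
  carrier := {f | NonposSupp f}
  zero_mem' := fun _ _ => rfl
  one_mem' := nonposSupp_one
  add_mem' := fun {f g} hf hg n hn => by
    show (f + g).coeff n = 0
    rw [coeff_add, hf n hn, hg n hn, add_zero]
  neg_mem' := fun {f} hf n hn => by
    show (-f).coeff n = 0
    rw [coeff_neg, hf n hn, neg_zero]
  mul_mem' := by
    intro f g hf hg n hn
    by_contra h
    have hmem : n ∈ (f * g).coeff.support := Finsupp.mem_support_iff.2 h
    have h2 := AddMonoidAlgebra.support_coeff_mul_subset f g hmem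
    rw [Finset.mem_add] at h2
    obtain ⟨b, hb, c, hc, rfl⟩ := h2
    have hb' : b ≤ 0 := le_of_not_gt fun hb0 => (Finsupp.mem_support_iff.1 hb) (hf b hb0)
    have hc' : c ≤ 0 := le_of_not_gt fun hc0 => (Finsupp.mem_support_iff.1 hc) (hg c hc0)
    omega

lemma T_mem_Aneg {k : ℤ} (hk : k ≤ 0) : (T k : 𝔸) ∈ Aneg := by
  have h1 : (T k : 𝔸) = vinv ^ (-k).toNat := by
    rw [vinv, T_pow]
    congr 1
    omega
  have h2 : vinv ^ (-k).toNat ∈ Aneg := pow_mem vinv_mem_Aneg _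
  rw [h1]; exact h2

lemma mem_Aneg_iff {f : 𝔸} : f ∈ Aneg ↔ NonposSupp f := by
  constructor
  · intro hf
    have : Aneg ≤ Snonpos := Subring.closure_le.2 (by
      rintro x rfl
      exact nonposSupp_T (by norm_num))
    exact this hf
  · intro hf
    have key : ∀ g : ℤ →₀ ℤ, (∀ n ∈ g.support, n ≤ 0) →
        (AddMonoidAlgebra.ofCoeff g : 𝔸) ∈ Aneg := by
      intro g
      induction g using Finsupp.induction with
      | zero => intro _; exact zero_mem _
      | single_add a c g ha0 hc ih =>
        intro hsupp
        have hdisj : Disjoint (Finsupp.single a c).support g.support := by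
          rw [Finsupp.support_single_ne_zero _ hc]
          simpa using ha0
        have hsupp_eq := Finsupp.support_add_eq hdisj
        have hab : a ≤ 0 := by
          refine hsupp a ?_
          rw [hsupp_eq, Finsupp.support_single_ne_zero _ hc]
          exact Finset.mem_union_left _ (Finset.mem_singleton_self a)
        have hg : ∀ n ∈ g.support, n ≤ 0 := fun n hn =>
          hsupp n (by rw [hsupp_eq]; exact Finset.mem_union_right _ hn)
        rw [AddMonoidAlgebra.ofCoeff_add]
        refine add_mem ?_ (ih hg)
        have h1 : (AddMonoidAlgebra.single a c : 𝔸) = C c * T a := single_eq_C_mul_T c a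
        rw [AddMonoidAlgebra.ofCoeff_single, h1]
        refine mul_mem ?_ (T_mem_Aneg hab)
        rw [show (C c : 𝔸) = ((c : ℤ) : 𝔸) from by rw [eq_intCast]]
        exact intCast_mem _ c
    exact key f.coeff (fun n hn => le_of_not_gt fun h0 => (Finsupp.mem_support_iff.1 hn) (hf n h0))

lemma exists_negSupp_solution {f : 𝔸} (hf : invert f = -f) :
    ∃ g : 𝔸, NegSupp g ∧ invert g - g = f := by
  classical
  refine ⟨-(AddMonoidAlgebra.ofCoeff (f.coeff.filter (fun n : ℤ => n < 0)) : 𝔸), ?_, ?_⟩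
  · intro n hn
    rw [coeff_neg, AddMonoidAlgebra.coeff_ofCoeff, Finsupp.filter_apply, if_neg (by omega), neg_zero]
  · ext n
    have hskew : ∀ k : ℤ, f.coeff (-k) = -(f.coeff k) := fun k => by
      have := congrArg (fun p : 𝔸 => p.coeff k) hf
      simpa [invert_apply, coeff_neg] using this
    rw [coeff_sub, coeff_neg, invert_apply, coeff_neg, AddMonoidAlgebra.coeff_ofCoeff, Finsupp.filter_apply,
      Finsupp.filter_apply]
    rcases lt_trichotomy n 0 with h | h | h
    · rw [if_neg (by omega), if_pos h]
      simp
    · subst h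
      rw [if_neg (by omega), if_neg (by omega)]
      have := hskew 0
      simp only [neg_zero] at this
      omega
    · rw [if_pos (by omega), if_neg (by omega)]
      have := hskew n
      simp only [sub_zero, neg_zero, neg_neg, sub_neg_eq_add, zero_add]
      omega

lemma negSupp_invert_eq_self {f : 𝔸} (hN : NegSupp f) (hf : invert f = f) : f = 0 := by
  ext n
  rcases le_or_gt 0 n with h | h
  · exact hN n h
  · have := congrArg (fun p : 𝔸 => p.coeff n) hf
    simp only [invert_apply] at this
    rw [← this]
    exact hN (-n) (by omega)

lemma NegSupp.eq_vinv_mul {f : 𝔸} (hf : NegSupp f) :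
    ∃ g : 𝔸, NonposSupp g ∧ f = vinv * g := by
  refine ⟨vv * f, ?_, ?_⟩
  · intro n hn
    by_contra h
    have hmem : n ∈ (vv * f).coeff.support := Finsupp.mem_support_iff.2 h
    have h2 := AddMonoidAlgebra.support_coeff_mul_subset vv f hmem
    rw [Finset.mem_add] at h2
    obtain ⟨b, hb, c, hc, rfl⟩ := h2
    have hb' : b = 1 := by
      have := Finsupp.mem_support_iff.1 hb
      by_contra hne
      exact this (by rw [vv, coeff_T, if_neg (fun hh => hne hh.symm)])
    have hc' : c < 0 := lt_of_not_ge fun hc0 => (Finsupp.mem_support_iff.1 hc) (hf c hc0)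
    omega
  · rw [← mul_assoc, vinv, vv, ← T_add]
    norm_num

lemma vinv_mul_nonpos_negSupp {g : 𝔸} (hg : NonposSupp g) : NegSupp (vinv * g) := by
  intro n hn
  by_contra h
  have hmem : n ∈ (vinv * g).coeff.support := Finsupp.mem_support_iff.2 h
  have h2 := AddMonoidAlgebra.support_coeff_mul_subset vinv g hmem
  rw [Finset.mem_add] at h2
  obtain ⟨b, hb, c, hc, rfl⟩ := h2
  have hb' : b = -1 := by
    have := Finsupp.mem_support_iff.1 hb
    by_contra hne
    exact this (by rw [vinv, coeff_T, if_neg (fun hh => hne hh.symm)])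
  have hc' : c ≤ 0 := le_of_not_gt fun hc0 => (Finsupp.mem_support_iff.1 hc) (hg c hc0)
  omega


/-! ### Module-level lemmas -/

section Du
set_option linter.unusedSectionVars false

variable {I : Type} [PartialOrder I] {M : Type} [AddCommGroup M] [Module 𝔸 M]

lemma bar_smul (bar : M → M) (hadd : ∀ x y : M, bar (x + y) = bar x + bar y)
    (hsemi : ∀ (n : ℤ) (x : M),
      bar ((LaurentPolynomial.T n : 𝔸) • x) = (LaurentPolynomial.T (-n) : 𝔸) • bar x)
    (f : 𝔸) (x : M) : bar (f • x) = invert f • bar x := by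
  have hz : ∀ (k : ℤ) (y : M), bar (k • y) = k • bar y := fun k y =>
    map_zsmul (AddMonoidHom.mk' bar hadd) k y
  induction f using LaurentPolynomial.induction_on' with
  | add p q hp hq =>
    rw [add_smul, hadd, hp, hq, map_add, add_smul]
  | C_mul_T n c =>
    have hC : (C c : 𝔸) = ((c : ℤ) : 𝔸) := by rw [eq_intCast]
    rw [mul_smul, hC, Int.cast_smul_eq_zsmul, hz, hsemi, ← Int.cast_smul_eq_zsmul 𝔸,
      ← hC, ← mul_smul, map_mul, invert_C, invert_T]

omit [PartialOrder I] in
lemma bar_sub (bar : M → M) (hadd : ∀ x y : M, bar (x + y) = bar x + bar y)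
    (x y : M) : bar (x - y) = bar x - bar y :=
  map_sub (AddMonoidHom.mk' bar hadd) x y

omit [PartialOrder I] in
lemma bar_zero (bar : M → M) (hadd : ∀ x y : M, bar (x + y) = bar x + bar y) :
    bar 0 = 0 :=
  map_zero (AddMonoidHom.mk' bar hadd)

omit [PartialOrder I] in
def m'basis (m : Module.Basis I 𝔸 M) (r : I → ℤ) : Module.Basis I 𝔸 M :=
  m.unitsSMul fun i => (isUnit_T (r i)).unit

omit [PartialOrder I] in
lemma m'basis_eq (m : Module.Basis I 𝔸 M) (r : I → ℤ) (m' : I → M)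
    (hm' : ∀ i : I, m' i = (LaurentPolynomial.T (r i) : 𝔸) • m i) (i : I) :
    m'basis m r i = m' i := by
  rw [hm', m'basis, Module.Basis.unitsSMul_apply, Units.smul_def, IsUnit.unit_spec]

open scoped Classical in
lemma repr_bar_m' (hfin : ∀ j : I, {i : I | i ≤ j}.Finite)
    (m : Module.Basis I 𝔸 M) (bar : M → M) (r : I → ℤ) (m' : I → M)
    (hm' : ∀ i : I, m' i = (LaurentPolynomial.T (r i) : 𝔸) • m i)
    (a : I → I → 𝔸)
    (ha : ∀ j : I, bar (m' j) = ∑ᶠ i ∈ {i : I | i ≤ j}, a i j • m' i)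
    (j i : I) :
    ((m'basis m r).repr (bar (m' j))) i = if i ≤ j then a i j else 0 := by
  rw [ha j]
  have h1 : ∑ᶠ k ∈ {k : I | k ≤ j}, a k j • m' k
      = ∑ k ∈ (hfin j).toFinset, a k j • m' k := by
    have hset : {k : I | k ≤ j} = ↑(hfin j).toFinset := (Set.Finite.coe_toFinset _).symm
    conv_lhs => rw [hset]
    rw [finsum_mem_coe_finset]
  rw [h1, map_sum, Finsupp.finset_sum_apply]
  have h2 : ∀ k, (m'basis m r).repr (a k j • m' k) i
      = a k j * (if k = i then 1 else 0) := by
    intro k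
    rw [map_smul, ← m'basis_eq m r m' hm' k, Module.Basis.repr_self, Finsupp.smul_apply,
      Finsupp.single_apply, smul_eq_mul]
  simp only [h2, mul_ite, mul_one, mul_zero]
  rw [Finset.sum_ite_eq' (hfin j).toFinset i (fun k => a k j)]
  simp [Set.Finite.mem_toFinset]

lemma repr_bar (m : Module.Basis I 𝔸 M) (bar : M → M)
    (hadd : ∀ x y : M, bar (x + y) = bar x + bar y)
    (hsemi : ∀ (n : ℤ) (x : M),
      bar ((LaurentPolynomial.T n : 𝔸) • x) = (LaurentPolynomial.T (-n) : 𝔸) • bar x)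
    (r : I → ℤ) (m' : I → M)
    (hm' : ∀ i : I, m' i = (LaurentPolynomial.T (r i) : 𝔸) • m i)
    (x : M) (i : I) :
    ((m'basis m r).repr (bar x)) i
      = ∑ j ∈ ((m'basis m r).repr x).support,
          invert (((m'basis m r).repr x) j) * ((m'basis m r).repr (bar (m' j))) i := by
  classical
  set b := m'basis m r with hb
  have hx : x = ∑ j ∈ (b.repr x).support, (b.repr x) j • b j := by
    conv_lhs => rw [← b.linearCombination_repr x]
    rw [Finsupp.linearCombination_apply, Finsupp.sum]
  have hbar : bar x = ∑ j ∈ (b.repr x).support, invert ((b.repr x) j) • bar (b j) := by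
    conv_lhs => rw [hx]
    rw [show bar = ⇑(AddMonoidHom.mk' bar hadd) from rfl, map_sum]
    exact Finset.sum_congr rfl fun j _ => bar_smul bar hadd hsemi _ _
  rw [hbar, map_sum, Finsupp.finset_sum_apply]
  refine Finset.sum_congr rfl fun j _ => ?_
  rw [map_smul, Finsupp.smul_apply, smul_eq_mul, m'basis_eq m r m' hm' j]

lemma repr_bar_maximal (hfin : ∀ j : I, {i : I | i ≤ j}.Finite)
    (m : Module.Basis I 𝔸 M) (bar : M → M)
    (hadd : ∀ x y : M, bar (x + y) = bar x + bar y)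
    (hsemi : ∀ (n : ℤ) (x : M),
      bar ((LaurentPolynomial.T n : 𝔸) • x) = (LaurentPolynomial.T (-n) : 𝔸) • bar x)
    (r : I → ℤ) (m' : I → M)
    (hm' : ∀ i : I, m' i = (LaurentPolynomial.T (r i) : 𝔸) • m i)
    (a : I → I → 𝔸)
    (ha : ∀ j : I, bar (m' j) = ∑ᶠ i ∈ {i : I | i ≤ j}, a i j • m' i)
    (haa : ∀ j : I, a j j = 1)
    (x : M) (i : I)
    (hmax : ∀ j ∈ ((m'basis m r).repr x).support, i ≤ j → j = i) :
    ((m'basis m r).repr (bar x)) i = invert (((m'basis m r).repr x) i) := by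
  classical
  rw [repr_bar m bar hadd hsemi r m' hm' x i]
  rw [Finset.sum_eq_single i]
  · rw [repr_bar_m' hfin m bar r m' hm' a ha, if_pos le_rfl, haa, mul_one]
  · intro k hk hkne
    rw [repr_bar_m' hfin m bar r m' hm' a ha, if_neg, mul_zero]
    intro hle
    exact hkne (hmax k hk hle)
  · intro hnot
    rw [Finsupp.notMem_support_iff.1 hnot, map_zero, zero_mul]


lemma mem_L_iff (m : Module.Basis I 𝔸 M) (r : I → ℤ) (m' : I → M)
    (hm' : ∀ i : I, m' i = (LaurentPolynomial.T (r i) : 𝔸) • m i) (x : M) :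
    x ∈ Submodule.span Aneg (Set.range m') ↔ ∀ i, NonposSupp ((m'basis m r).repr x i) := by
  classical
  constructor
  · intro hx
    let SL : Submodule Aneg M :=
      { carrier := {z | ∀ i, ((m'basis m r).repr z i) ∈ Aneg}
        add_mem' := fun hy hz i => by
          rw [map_add, Finsupp.add_apply]; exact add_mem (hy i) (hz i)
        zero_mem' := fun i => by
          rw [map_zero, Finsupp.zero_apply]; exact zero_mem _
        smul_mem' := fun c z hz i => by
          rw [show c • z = (c : 𝔸) • z from rfl, map_smul, Finsupp.smul_apply, smul_eq_mul]
          exact mul_mem c.2 (hz i) }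
    have hle : Submodule.span Aneg (Set.range m') ≤ SL := by
      rw [Submodule.span_le]
      rintro _ ⟨j, rfl⟩ i
      show ((m'basis m r).repr (m' j)) i ∈ Aneg
      rw [← m'basis_eq m r m' hm' j, Module.Basis.repr_self, Finsupp.single_apply]
      split
      · exact one_mem _
      · exact zero_mem _
    exact fun i => mem_Aneg_iff.1 (hle hx i)
  · intro h
    have hx : x = ∑ k ∈ ((m'basis m r).repr x).support,
        ((m'basis m r).repr x) k • (m'basis m r) k := by
      conv_lhs => rw [← (m'basis m r).linearCombination_repr x]
      rw [Finsupp.linearCombination_apply, Finsupp.sum]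
    rw [hx]
    refine Submodule.sum_mem _ fun k _ => ?_
    have hk2 : ((m'basis m r).repr x) k ∈ Aneg := mem_Aneg_iff.2 (h k)
    rw [show ((m'basis m r).repr x) k • (m'basis m r) k
        = (⟨_, hk2⟩ : Aneg) • (m'basis m r) k from rfl]
    exact Submodule.smul_mem _ _
      (Submodule.subset_span ⟨k, (m'basis_eq m r m' hm' k).symm⟩)

open Pointwise in
lemma mem_vL_iff (m : Module.Basis I 𝔸 M) (r : I → ℤ) (m' : I → M)
    (hm' : ∀ i : I, m' i = (LaurentPolynomial.T (r i) : 𝔸) • m i) (x : M) :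
    x ∈ Submodule.span Aneg
        (vinv • (Submodule.span Aneg (Set.range m') : Set M))
      ↔ ∀ i, NegSupp ((m'basis m r).repr x i) := by
  classical
  constructor
  · intro hx
    let SN : Submodule Aneg M :=
      { carrier := {z | ∀ i, NegSupp ((m'basis m r).repr z i)}
        add_mem' := fun hy hz i => by
          rw [map_add, Finsupp.add_apply]
          exact NegSupp.add (hy i) (hz i)
        zero_mem' := fun i => by
          rw [map_zero, Finsupp.zero_apply]; exact NegSupp.zero
        smul_mem' := fun c z hz i => by
          rw [show c • z = (c : 𝔸) • z from rfl, map_smul, Finsupp.smul_apply, smul_eq_mul]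
          exact NonposSupp.mul_neg (mem_Aneg_iff.1 c.2) (hz i) }
    have hle : Submodule.span Aneg
        (vinv • (Submodule.span Aneg (Set.range m') : Set M)) ≤ SN := by
      rw [Submodule.span_le]
      rintro _ ⟨y, hy, rfl⟩ i
      show NegSupp ((m'basis m r).repr (vinv • y) i)
      rw [map_smul, Finsupp.smul_apply, smul_eq_mul]
      exact vinv_mul_nonpos_negSupp ((mem_L_iff m r m' hm' y).1 hy i)
    exact hle hx
  · intro h
    have hx : x = ∑ k ∈ ((m'basis m r).repr x).support,
        ((m'basis m r).repr x) k • (m'basis m r) k := by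
      conv_lhs => rw [← (m'basis m r).linearCombination_repr x]
      rw [Finsupp.linearCombination_apply, Finsupp.sum]
    rw [hx]
    refine Submodule.sum_mem _ fun k _ => ?_
    obtain ⟨g, hg, hfg⟩ := NegSupp.eq_vinv_mul (h k)
    have hmem : vinv • m' k ∈ vinv • (Submodule.span Aneg (Set.range m') : Set M) :=
      Set.smul_mem_smul_set (Submodule.subset_span ⟨k, rfl⟩)
    have hgA : g ∈ Aneg := mem_Aneg_iff.2 hg
    have heq : ((m'basis m r).repr x) k • (m'basis m r) k
        = (⟨g, hgA⟩ : Aneg) • (vinv • m' k) := by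
      rw [m'basis_eq m r m' hm' k,
        show (⟨g, hgA⟩ : Aneg) • (vinv • m' k) = g • (vinv • m' k) from rfl,
        ← mul_smul, mul_comm, ← hfg]
    rw [heq]
    exact Submodule.smul_mem _ _ (Submodule.subset_span hmem)


/-- the properties characterizing the IC basis element attached to `j` -/
def IsGood (m : Module.Basis I 𝔸 M) (r : I → ℤ) (bar : M → M) (j : I) (y : M) : Prop :=
  bar y = y ∧ ((m'basis m r).repr y) j = 1 ∧
  (∀ i, i ≠ j → NegSupp (((m'basis m r).repr y) i)) ∧
  (∀ i ∈ ((m'basis m r).repr y).support, i ≤ j)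

omit [PartialOrder I] in
lemma IsGood.coeff_nonpos {m : Module.Basis I 𝔸 M} {r : I → ℤ} {bar : M → M} {j : I} {y : M}
    [PartialOrder I] (h : IsGood m r bar j y) (i : I) :
    NonposSupp (((m'basis m r).repr y) i) := by
  by_cases hij : i = j
  · subst hij; rw [h.2.1]; exact nonposSupp_one
  · exact (h.2.2.1 i hij).nonpos

omit [PartialOrder I] in
lemma Dclset_finite [PartialOrder I] (hfin : ∀ j : I, {i : I | i ≤ j}.Finite)
    (s : Finset I) : {k : I | ∃ i ∈ s, k ≤ i}.Finite := by
  refine (s.finite_toSet.biUnion fun i _ => hfin i).subset ?_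
  rintro k ⟨i, hi, hk⟩
  exact Set.mem_biUnion hi hk

/-- downward closure of a finite set -/
def Dcl (hfin : ∀ j : I, {i : I | i ≤ j}.Finite) (s : Finset I) : Finset I :=
  (Dclset_finite hfin s).toFinset

lemma mem_Dcl {hfin : ∀ j : I, {i : I | i ≤ j}.Finite} {s : Finset I} {k : I} :
    k ∈ Dcl hfin s ↔ ∃ i ∈ s, k ≤ i := Set.Finite.mem_toFinset _

lemma solveE (hfin : ∀ j : I, {i : I | i ≤ j}.Finite)
    (m : Module.Basis I 𝔸 M) (bar : M → M)
    (hadd : ∀ x y : M, bar (x + y) = bar x + bar y)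
    (hsemi : ∀ (n : ℤ) (x : M),
      bar ((LaurentPolynomial.T n : 𝔸) • x) = (LaurentPolynomial.T (-n) : 𝔸) • bar x)
    (r : I → ℤ) (m' : I → M)
    (hm' : ∀ i : I, m' i = (LaurentPolynomial.T (r i) : 𝔸) • m i)
    (a : I → I → 𝔸)
    (ha : ∀ j : I, bar (m' j) = ∑ᶠ i ∈ {i : I | i ≤ j}, a i j • m' i)
    (haa : ∀ j : I, a j j = 1) :
    ∀ (n : ℕ) (d : M),
    bar d = -d →
    (∀ i ∈ Dcl hfin ((m'basis m r).repr d).support, ∃ y, IsGood m r bar i y) →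
    (Dcl hfin ((m'basis m r).repr d).support).card ≤ n →
    ∃ y : M, bar y - y = d ∧ (∀ i, NegSupp (((m'basis m r).repr y) i)) ∧
      ∀ i ∈ ((m'basis m r).repr y).support,
        i ∈ Dcl hfin ((m'basis m r).repr d).support := by
  classical
  have base : ∀ d : M, ((m'basis m r).repr d).support = ∅ →
      ∃ y : M, bar y - y = d ∧ (∀ i, NegSupp (((m'basis m r).repr y) i)) ∧
      ∀ i ∈ ((m'basis m r).repr y).support,
        i ∈ Dcl hfin ((m'basis m r).repr d).support := by
    intro d hd
    have hd0 : d = 0 := by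
      have : (m'basis m r).repr d = 0 := Finsupp.support_eq_empty.1 hd
      simpa using (m'basis m r).repr.map_eq_zero_iff.1 this
    refine ⟨0, ?_, ?_, ?_⟩
    · rw [bar_zero bar hadd, sub_zero, hd0]
    · intro i
      rw [map_zero, Finsupp.zero_apply]
      exact NegSupp.zero
    · intro i hi
      rw [map_zero, Finsupp.support_zero] at hi
      exact absurd hi (Finset.notMem_empty i)
  intro n
  induction n with
  | zero =>
    intro d hskew hc hcard
    refine base d ?_
    rw [Nat.le_zero, Finset.card_eq_zero] at hcard
    by_contra hne
    obtain ⟨k, hk⟩ := Finset.nonempty_of_ne_empty hne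
    have hmem : k ∈ Dcl hfin ((m'basis m r).repr d).support := mem_Dcl.2 ⟨k, hk, le_rfl⟩
    rw [hcard] at hmem
    exact absurd hmem (Finset.notMem_empty k)
  | succ n ih =>
    intro d hskew hc hcard
    by_cases hempty : ((m'basis m r).repr d).support = ∅
    · exact base d hempty
    set b := m'basis m r with hbdef
    obtain ⟨i, hi, hmaxi⟩ :=
      (b.repr d).support.exists_maximal (Finset.nonempty_of_ne_empty hempty)
    have hmax : ∀ j ∈ (b.repr d).support, i ≤ j → j = i := fun j hj hij =>
      le_antisymm (hmaxi hj hij) hij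
    set f : 𝔸 := (b.repr d) i with hfdef
    have hskewf : invert f = -f := by
      have h1 := repr_bar_maximal hfin m bar hadd hsemi r m' hm' a ha haa d i hmax
      rw [hskew, map_neg] at h1
      have h2 : ((-(b.repr d)) : I →₀ 𝔸) i = -f := by
        rw [Finsupp.neg_apply]
      rw [h2] at h1
      exact h1.symm
    obtain ⟨ci, hgood⟩ := hc i (mem_Dcl.2 ⟨i, hi, le_rfl⟩)
    obtain ⟨g, hgNeg, hgsol⟩ := exists_negSupp_solution hskewf
    set d' := d - f • ci with hd'def
    have hrepr' : ∀ k, (b.repr d') k = (b.repr d) k - f * (b.repr ci) k := by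
      intro k
      rw [hd'def, map_sub, map_smul, Finsupp.sub_apply, Finsupp.smul_apply, smul_eq_mul]
    have hd'i : (b.repr d') i = 0 := by
      rw [hrepr' i, hgood.2.1, mul_one, ← hfdef, sub_self]
    have hsupp' : ∀ k ∈ (b.repr d').support,
        k ∈ Dcl hfin (b.repr d).support ∧ k ≠ i := by
      intro k hk
      have hkne : k ≠ i := fun h => (Finsupp.mem_support_iff.1 hk) (h ▸ hd'i)
      refine ⟨?_, hkne⟩
      have hne := Finsupp.mem_support_iff.1 hk
      rw [hrepr' k] at hne
      by_cases h1 : (b.repr d) k = 0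
      · have h2 : (b.repr ci) k ≠ 0 := by
          intro h3
          rw [h1, h3, mul_zero, sub_zero] at hne
          exact hne rfl
        have := hgood.2.2.2 k (Finsupp.mem_support_iff.2 h2)
        exact mem_Dcl.2 ⟨i, hi, this⟩
      · exact mem_Dcl.2 ⟨k, Finsupp.mem_support_iff.2 h1, le_rfl⟩
    have hDcl' : Dcl hfin (b.repr d').support ⊆
        (Dcl hfin (b.repr d).support).erase i := by
      intro k hk
      obtain ⟨l, hl, hkl⟩ := mem_Dcl.1 hk
      obtain ⟨hlD, hlne⟩ := hsupp' l hl
      obtain ⟨m0, hm0, hlm0⟩ := mem_Dcl.1 hlD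
      rw [Finset.mem_erase]
      constructor
      · intro hki
        have hil : i ≤ l := hki ▸ hkl
        have hm0i : m0 = i := hmax m0 hm0 (hil.trans hlm0)
        exact hlne (le_antisymm (hm0i ▸ hlm0) hil)
      · exact mem_Dcl.2 ⟨m0, hm0, le_trans hkl hlm0⟩
    have hiD : i ∈ Dcl hfin (b.repr d).support := mem_Dcl.2 ⟨i, hi, le_rfl⟩
    have hcard' : (Dcl hfin (b.repr d').support).card ≤ n := by
      have h1 := Finset.card_le_card hDcl'
      rw [Finset.card_erase_of_mem hiD] at h1
      omega
    have hskew' : bar d' = -d' := by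
      have h2 : bar (f • ci) = -(f • ci) := by
        rw [bar_smul bar hadd hsemi, hgood.1, hskewf, neg_smul]
      rw [hd'def, bar_sub bar hadd, hskew, h2]
      abel
    have hc' : ∀ k ∈ Dcl hfin (b.repr d').support, ∃ y, IsGood m r bar k y :=
      fun k hk => hc k (Finset.mem_of_mem_erase (hDcl' hk))
    obtain ⟨y', hy1, hy2, hy3⟩ := ih d' hskew' hc' hcard'
    refine ⟨y' + g • ci, ?_, ?_, ?_⟩
    · have h2 : bar (g • ci) = invert g • ci := by
        rw [bar_smul bar hadd hsemi, hgood.1]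
      rw [hadd, h2]
      have h3 : invert g • ci - g • ci = f • ci := by
        rw [← sub_smul, hgsol]
      have : d' + f • ci = d := by rw [hd'def]; abel
      calc bar y' + invert g • ci - (y' + g • ci)
          = (bar y' - y') + (invert g • ci - g • ci) := by abel
        _ = d' + f • ci := by rw [hy1, h3]
        _ = d := this
    · intro k
      rw [map_add, Finsupp.add_apply, map_smul, Finsupp.smul_apply, smul_eq_mul]
      exact NegSupp.add (hy2 k) (neg_mul_nonpos hgNeg (hgood.coeff_nonpos k))
    · intro k hk
      have hne := Finsupp.mem_support_iff.1 hk
      rw [map_add, Finsupp.add_apply, map_smul, Finsupp.smul_apply, smul_eq_mul] at hne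
      by_cases h1 : (b.repr y') k = 0
      · have h2 : (b.repr ci) k ≠ 0 := by
          intro h3
          rw [h1, h3, mul_zero, add_zero] at hne
          exact hne rfl
        exact mem_Dcl.2 ⟨i, hi, hgood.2.2.2 k (Finsupp.mem_support_iff.2 h2)⟩
      · exact Finset.mem_of_mem_erase (hDcl' (hy3 k (Finsupp.mem_support_iff.2 h1)))


lemma card_lt_of_lt (hfin : ∀ j : I, {i : I | i ≤ j}.Finite) {k i : I} (h : k < i) :
    (hfin k).toFinset.card < (hfin i).toFinset.card := by
  have hsub : (hfin k).toFinset ⊆ (hfin i).toFinset := fun x hx =>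
    (hfin i).mem_toFinset.2 (le_trans ((hfin k).mem_toFinset.1 hx) h.le)
  refine Finset.card_lt_card ((Finset.ssubset_iff_of_subset hsub).2 ⟨i, ?_, ?_⟩)
  · exact (hfin i).mem_toFinset.2 le_rfl
  · intro hmem
    exact absurd (h.trans_le ((hfin k).mem_toFinset.1 hmem)) (lt_irrefl k)

lemma exists_good (hfin : ∀ j : I, {i : I | i ≤ j}.Finite)
    (m : Module.Basis I 𝔸 M) (bar : M → M)
    (hadd : ∀ x y : M, bar (x + y) = bar x + bar y)
    (hsemi : ∀ (n : ℤ) (x : M),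
      bar ((LaurentPolynomial.T n : 𝔸) • x) = (LaurentPolynomial.T (-n) : 𝔸) • bar x)
    (hinv : ∀ x : M, bar (bar x) = x)
    (r : I → ℤ) (m' : I → M)
    (hm' : ∀ i : I, m' i = (LaurentPolynomial.T (r i) : 𝔸) • m i)
    (a : I → I → 𝔸)
    (ha : ∀ j : I, bar (m' j) = ∑ᶠ i ∈ {i : I | i ≤ j}, a i j • m' i)
    (haa : ∀ j : I, a j j = 1) :
    ∀ (n : ℕ) (j : I), (hfin j).toFinset.card ≤ n → ∃ y, IsGood m r bar j y := by
  classical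
  intro n
  induction n using Nat.strong_induction_on with
  | _ n ih =>
  intro j hj
  set b := m'basis m r with hbdef
  set d := m' j - bar (m' j) with hddef
  have hskew : bar d = -d := by
    rw [hddef, bar_sub bar hadd, hinv (m' j)]
    abel
  have hreprd : ∀ k, (b.repr d) k
      = (if j = k then (1:𝔸) else 0) - (if k ≤ j then a k j else 0) := by
    intro k
    rw [hddef, map_sub, Finsupp.sub_apply, repr_bar_m' hfin m bar r m' hm' a ha]
    congr 1
    rw [← m'basis_eq m r m' hm' j, Module.Basis.repr_self, Finsupp.single_apply]
  have hsuppd : ∀ k ∈ (b.repr d).support, k < j := by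
    intro k hk
    have hne := Finsupp.mem_support_iff.1 hk
    rw [hreprd k] at hne
    by_cases h1 : k ≤ j
    · rcases eq_or_lt_of_le h1 with h2 | h2
      · exfalso
        apply hne
        rw [if_pos h2.symm, if_pos h1, h2, haa j, sub_self]
      · exact h2
    · exfalso
      apply hne
      rw [if_neg (fun h => h1 (le_of_eq h.symm)), if_neg h1, sub_zero]
  have hc : ∀ i ∈ Dcl hfin (b.repr d).support, ∃ y, IsGood m r bar i y := by
    intro i hiD
    obtain ⟨k, hk, hik⟩ := mem_Dcl.1 hiD
    have hij : i < j := lt_of_le_of_lt hik (hsuppd k hk)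
    exact ih ((hfin i).toFinset.card)
      (lt_of_lt_of_le (card_lt_of_lt hfin hij) hj) i le_rfl
  obtain ⟨y, hy1, hy2, hy3⟩ := solveE hfin m bar hadd hsemi r m' hm' a ha haa
      (Dcl hfin (b.repr d).support).card d hskew hc le_rfl
  have hyj : (b.repr y) j = 0 := by
    by_contra h
    obtain ⟨k, hk, hjk⟩ := mem_Dcl.1 (hy3 j (Finsupp.mem_support_iff.2 h))
    exact absurd ((hsuppd k hk).trans_le hjk) (lt_irrefl k)
  refine ⟨m' j + y, ?_, ?_, ?_, ?_⟩
  · rw [hadd, eq_add_of_sub_eq hy1, hddef]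
    abel
  · rw [map_add, Finsupp.add_apply, hyj, add_zero, ← m'basis_eq m r m' hm' j,
      Module.Basis.repr_self, Finsupp.single_apply, if_pos rfl]
  · intro k hkj
    rw [map_add, Finsupp.add_apply, ← m'basis_eq m r m' hm' j, Module.Basis.repr_self,
      Finsupp.single_apply, if_neg (fun h => hkj h.symm), zero_add]
    exact hy2 k
  · intro k hk
    have hne := Finsupp.mem_support_iff.1 hk
    rw [map_add, Finsupp.add_apply] at hne
    by_cases h1 : (b.repr y) k = 0
    · have h2 : (b.repr (m' j)) k ≠ 0 := fun h3 => hne (by rw [h1, h3, add_zero])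
      rw [← m'basis_eq m r m' hm' j, Module.Basis.repr_self, Finsupp.single_apply] at h2
      by_cases h3 : j = k
      · exact le_of_eq h3.symm
      · exfalso
        rw [if_neg h3] at h2
        exact h2 rfl
    · obtain ⟨k2, hk2, hkk2⟩ := mem_Dcl.1 (hy3 k (Finsupp.mem_support_iff.2 h1))
      exact le_of_lt (lt_of_le_of_lt hkk2 (hsuppd k2 hk2))

lemma vanish (hfin : ∀ j : I, {i : I | i ≤ j}.Finite)
    (m : Module.Basis I 𝔸 M) (bar : M → M)
    (hadd : ∀ x y : M, bar (x + y) = bar x + bar y)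
    (hsemi : ∀ (n : ℤ) (x : M),
      bar ((LaurentPolynomial.T n : 𝔸) • x) = (LaurentPolynomial.T (-n) : 𝔸) • bar x)
    (r : I → ℤ) (m' : I → M)
    (hm' : ∀ i : I, m' i = (LaurentPolynomial.T (r i) : 𝔸) • m i)
    (a : I → I → 𝔸)
    (ha : ∀ j : I, bar (m' j) = ∑ᶠ i ∈ {i : I | i ≤ j}, a i j • m' i)
    (haa : ∀ j : I, a j j = 1)
    (d : M) (hbar : bar d = d)
    (hN : ∀ i, NegSupp (((m'basis m r).repr d) i)) : d = 0 := by
  classical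
  by_contra hne
  set b := m'basis m r with hbdef
  have hsupp : (b.repr d).support.Nonempty := by
    rw [Finsupp.support_nonempty_iff]
    intro h0
    exact hne (by simpa using b.repr.map_eq_zero_iff.1 h0)
  obtain ⟨i, hi, hmaxi⟩ := (b.repr d).support.exists_maximal hsupp
  have hmax : ∀ j ∈ (b.repr d).support, i ≤ j → j = i := fun j hj hij =>
    le_antisymm (hmaxi hj hij) hij
  have h1 := repr_bar_maximal hfin m bar hadd hsemi r m' hm' a ha haa d i hmax
  rw [hbar] at h1
  exact (Finsupp.mem_support_iff.1 hi) (negSupp_invert_eq_self (hN i) h1.symm)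

lemma good_linearIndependent (m : Module.Basis I 𝔸 M) (r : I → ℤ) (bar : M → M)
    (c : I → M) (hgood : ∀ i, IsGood m r bar i (c i)) :
    LinearIndependent 𝔸 c := by
  classical
  refine linearIndependent_iff''.2 fun s g hg0 hsum i0 => ?_
  by_contra hgne
  set t := s.filter (fun k => g k ≠ 0) with htdef
  have htne : t.Nonempty :=
    ⟨i0, Finset.mem_filter.2 ⟨by_contra fun h => hgne (hg0 i0 h), hgne⟩⟩
  obtain ⟨i, hit, hmaxi⟩ := t.exists_maximal htne
  have hgi : g i ≠ 0 := (Finset.mem_filter.1 hit).2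
  have happ := congrArg (fun z : M => ((m'basis m r).repr z) i) hsum
  simp only [map_zero, Finsupp.zero_apply] at happ
  rw [map_sum, Finsupp.finset_sum_apply] at happ
  rw [Finset.sum_congr rfl (fun k (_ : k ∈ s) => by
    rw [map_smul, Finsupp.smul_apply, smul_eq_mul] :
      ∀ k ∈ s, ((m'basis m r).repr (g k • c k)) i
        = g k * ((m'basis m r).repr (c k)) i)] at happ
  rw [Finset.sum_eq_single i] at happ
  · rw [(hgood i).2.1, mul_one] at happ
    exact hgi happ
  · intro k hk hkne
    by_cases h1 : g k = 0
    · rw [h1, zero_mul]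
    · have hkt : k ∈ t := Finset.mem_filter.2 ⟨hk, h1⟩
      have hzero : ((m'basis m r).repr (c k)) i = 0 := by
        by_contra h2
        have hik : i ≤ k := (hgood k).2.2.2 i (Finsupp.mem_support_iff.2 h2)
        exact hkne (le_antisymm (hmaxi hkt hik) hik)
      rw [hzero, mul_zero]
  · intro his
    exact absurd ((Finset.mem_filter.1 hit).1) his

lemma m'_mem_span_c (hfin : ∀ j : I, {i : I | i ≤ j}.Finite)
    (m : Module.Basis I 𝔸 M) (bar : M → M)
    (r : I → ℤ) (m' : I → M)
    (hm' : ∀ i : I, m' i = (LaurentPolynomial.T (r i) : 𝔸) • m i)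
    (c : I → M) (hgood : ∀ i, IsGood m r bar i (c i)) :
    ∀ (n : ℕ) (i : I), (hfin i).toFinset.card ≤ n →
      m' i ∈ Submodule.span Aneg (Set.range c) := by
  classical
  intro n
  induction n using Nat.strong_induction_on with
  | _ n ih =>
  intro i hi
  set b := m'basis m r with hbdef
  have hci : c i = ∑ k ∈ (b.repr (c i)).support, (b.repr (c i)) k • b k := by
    conv_lhs => rw [← b.linearCombination_repr (c i)]
    rw [Finsupp.linearCombination_apply, Finsupp.sum]
  have himem : i ∈ (b.repr (c i)).support :=
    Finsupp.mem_support_iff.2 (by rw [(hgood i).2.1]; exact one_ne_zero)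
  have hsplit : m' i = c i - ∑ k ∈ (b.repr (c i)).support.erase i,
      (b.repr (c i)) k • b k := by
    have h1 : c i = m' i + ∑ k ∈ (b.repr (c i)).support.erase i,
        (b.repr (c i)) k • b k := by
      conv_lhs => rw [hci]
      rw [← Finset.add_sum_erase _ _ himem, (hgood i).2.1, one_smul,
        m'basis_eq m r m' hm' i]
    exact eq_sub_of_add_eq h1.symm
  rw [hsplit]
  refine Submodule.sub_mem _ (Submodule.subset_span ⟨i, rfl⟩)
    (Submodule.sum_mem _ fun k hk => ?_)
  have hk1 : k ∈ (b.repr (c i)).support := Finset.mem_of_mem_erase hk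
  have hklt : k < i :=
    lt_of_le_of_ne ((hgood i).2.2.2 k hk1) (Finset.ne_of_mem_erase hk)
  have hmem : m' k ∈ Submodule.span Aneg (Set.range c) :=
    ih ((hfin k).toFinset.card)
      (lt_of_lt_of_le (card_lt_of_lt hfin hklt) hi) k le_rfl
  have hA : (b.repr (c i)) k ∈ Aneg := mem_Aneg_iff.2 ((hgood i).coeff_nonpos k)
  rw [m'basis_eq m r m' hm' k,
    show (b.repr (c i)) k • m' k = (⟨_, hA⟩ : Aneg) • m' k from rfl]
  exact Submodule.smul_mem _ _ hmem

end Du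

/-- Theorem 2.2 (Du): existence and uniqueness of the IC basis. -/
theorem du_IC_basis {I : Type} [PartialOrder I]
    (hfin : ∀ j : I, {i : I | i ≤ j}.Finite)
    {M : Type} [AddCommGroup M] [Module 𝔸 M] (m : Module.Basis I 𝔸 M)
    (bar : M → M)
    (hadd : ∀ x y : M, bar (x + y) = bar x + bar y)
    (hsemi : ∀ (n : ℤ) (x : M),
      bar ((LaurentPolynomial.T n : 𝔸) • x) = (LaurentPolynomial.T (-n) : 𝔸) • bar x)
    (hinv : ∀ x : M, bar (bar x) = x)
    (r : I → ℤ) (m' : I → M)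
    (hm' : ∀ i : I, m' i = (LaurentPolynomial.T (r i) : 𝔸) • m i)
    (a : I → I → 𝔸)
    (ha : ∀ j : I, bar (m' j) = ∑ᶠ i ∈ {i : I | i ≤ j}, a i j • m' i)
    (haa : ∀ j : I, a j j = 1) :
    ∃! c : I → M,
      (∀ i, c i ∈ Submodule.span Aneg (Set.range m')) ∧
      (∃ bas : Module.Basis I Aneg (Submodule.span Aneg (Set.range m')),
        ∀ i, (bas i : M) = c i) ∧
      (∀ i, bar (c i) = c i) ∧
      (∀ i, c i - m' i ∈
        Submodule.span Aneg (vinv • (Submodule.span Aneg (Set.range m') : Set M))) := by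
  classical
  have hex : ∀ i : I, ∃ y, IsGood m r bar i y := fun i =>
    exists_good hfin m bar hadd hsemi hinv r m' hm' a ha haa
      ((hfin i).toFinset.card) i le_rfl
  set c : I → M := fun i => Classical.choose (hex i) with hcdef
  have hgood : ∀ i, IsGood m r bar i (c i) := fun i => Classical.choose_spec (hex i)
  have hL : ∀ i, c i ∈ Submodule.span Aneg (Set.range m') := fun i =>
    (mem_L_iff m r m' hm' (c i)).2 fun k => (hgood i).coeff_nonpos k
  have hvL : ∀ i, c i - m' i ∈ Submodule.span Aneg
      (vinv • (Submodule.span Aneg (Set.range m') : Set M)) := by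
    intro i
    refine (mem_vL_iff m r m' hm' _).2 fun k => ?_
    rw [map_sub, Finsupp.sub_apply, ← m'basis_eq m r m' hm' i, Module.Basis.repr_self,
      Finsupp.single_apply]
    by_cases h : i = k
    · rw [if_pos h, ← h, (hgood i).2.1, sub_self]
      exact NegSupp.zero
    · rw [if_neg h, sub_zero]
      exact (hgood i).2.2.1 k (fun hk => h hk.symm)
  have hli : LinearIndependent Aneg c := by
    refine (good_linearIndependent m r bar c hgood).restrict_scalars ?_
    intro x y hxy
    have h2 : (x : 𝔸) • (1 : 𝔸) = (y : 𝔸) • (1 : 𝔸) := hxy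
    simp only [smul_eq_mul, mul_one] at h2
    exact Subtype.ext h2
  have hspan : Submodule.span Aneg (Set.range c)
      = Submodule.span Aneg (Set.range m') := by
    apply le_antisymm
    · rw [Submodule.span_le]
      rintro _ ⟨i, rfl⟩
      exact hL i
    · rw [Submodule.span_le]
      rintro _ ⟨i, rfl⟩
      exact m'_mem_span_c hfin m bar r m' hm' c hgood ((hfin i).toFinset.card) i le_rfl
  refine ⟨c, ⟨hL, ⟨(Module.Basis.span hli).map (LinearEquiv.ofEq _ _ hspan), ?_⟩,
    fun i => (hgood i).1, hvL⟩, ?_⟩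
  · intro i
    rw [Module.Basis.map_apply]
    have h1 : (((LinearEquiv.ofEq _ _ hspan) (Module.Basis.span hli i) : _) : M)
        = ((Module.Basis.span hli i : _) : M) := rfl
    rw [h1, Module.Basis.span_apply]
  · rintro c' ⟨hL', ⟨bas', hbas'⟩, hbar', hvL'⟩
    funext i
    have hdmem : c' i - c i ∈ Submodule.span Aneg
        (vinv • (Submodule.span Aneg (Set.range m') : Set M)) := by
      have h1 : c' i - c i = (c' i - m' i) - (c i - m' i) := by abel
      rw [h1]
      exact Submodule.sub_mem _ (hvL' i) (hvL i)
    have hdbar : bar (c' i - c i) = c' i - c i := by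
      rw [bar_sub bar hadd, hbar' i, (hgood i).1]
    have hz := vanish hfin m bar hadd hsemi r m' hm' a ha haa (c' i - c i) hdbar
      ((mem_vL_iff m r m' hm' _).1 hdmem)
    exact sub_eq_zero.1 hz


end TLpaper
end
end

section
/- If the Coxeter graph X is simply laced and w ∈ W_c, then the product b_{s₁} b_{s₂} ⋯ b_{s_r} ∈ TL(X) is the same for every reduced expression w = s₁ s₂ ⋯ s_r of w; that is, the element b_w is well defined. -/
/-! Common setup: Laurent polynomials, Coxeter combinatorics, the Hecke algebra and
its generalized Temperley–Lieb quotient, axiomatized via structures. -/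

noncomputable section

open LaurentPolynomial Pointwise

namespace TLpaper

open LaurentPolynomial CoxeterSystem
open scoped Classical

section AuxScalars

lemma qpar_ne_zero : (qpar : 𝔸) ≠ 0 := (isUnit_T 2).ne_zero

lemma qpar_sub_one_ne_zero : (qpar - 1 : 𝔸) ≠ 0 := by
  intro h
  have h2 : (qpar : 𝔸) = T 0 := by rw [T_zero]; linear_combination h
  unfold qpar at h2
  have := congrArg (fun p : 𝔸 => p.coeff 2) h2
  simp only [T_apply] at this
  norm_num at this

lemma q1_ne : (qpar * (qpar - 1) : 𝔸) ≠ 0 := mul_ne_zero qpar_ne_zero qpar_sub_one_ne_zero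

lemma q2_ne : (qpar * (qpar - 1)^2 : 𝔸) ≠ 0 :=
  mul_ne_zero qpar_ne_zero (pow_ne_zero 2 qpar_sub_one_ne_zero)

lemma q3_ne : (qpar^2 * (qpar - 1) : 𝔸) ≠ 0 :=
  mul_ne_zero (pow_ne_zero 2 qpar_ne_zero) qpar_sub_one_ne_zero

/-- The coordinate functional attached to a basis. -/
noncomputable def coordH {W H : Type} [Ring H] [Algebra 𝔸 H] (b : Module.Basis W 𝔸 H) (z : W) :
    H →ₗ[𝔸] 𝔸 := (Finsupp.lapply z).comp b.repr.toLinearMap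

lemma coordH_basis {W H : Type} [Ring H] [Algebra 𝔸 H] (b : Module.Basis W 𝔸 H) (z x : W) :
    coordH b z (b x) = if x = z then 1 else 0 := by
  simp [coordH, Finsupp.single_apply]

end AuxScalars

section HeckeAux

variable {B W : Type} [Group W] {M : CoxeterMatrix B} (cs : CoxeterSystem M W)
variable {H : Type} [Ring H] [Algebra 𝔸 H]

/-- `σ` is a simple reflection. -/
def IsSimpleElt (σ : W) : Prop := ∃ i : B, σ = cs.simple i

lemma ne_of_len {x y : W} (hxy : cs.length x ≠ cs.length y) : x ≠ y :=
  fun e => hxy (by rw [e])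

namespace IsSimpleElt

variable {cs : CoxeterSystem M W} {σ τ x y : W}

lemma len (hσ : IsSimpleElt cs σ) : cs.length σ = 1 := by
  obtain ⟨i, rfl⟩ := hσ; exact cs.length_simple i

lemma sq (hσ : IsSimpleElt cs σ) : σ * σ = 1 := by
  obtain ⟨i, rfl⟩ := hσ; exact cs.simple_mul_simple_self i

lemma cancel (hσ : IsSimpleElt cs σ) (x : W) : σ * (σ * x) = x := by
  obtain ⟨i, rfl⟩ := hσ; exact cs.simple_mul_simple_cancel_left i

lemma inv (hσ : IsSimpleElt cs σ) : σ⁻¹ = σ := by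
  obtain ⟨i, rfl⟩ := hσ; exact cs.inv_simple i

lemma one_of_mul_eq (hσ : IsSimpleElt cs σ) (hτ : IsSimpleElt cs τ) (h : σ * τ = 1) :
    σ = τ := by
  have h2 : σ = τ⁻¹ := eq_inv_of_mul_eq_one_left h
  rw [hτ.inv] at h2; exact h2

lemma len_cases (hσ : IsSimpleElt cs σ) (w : W) :
    cs.length (σ * w) = cs.length w + 1 ∨ cs.length w = cs.length (σ * w) + 1 := by
  obtain ⟨i, rfl⟩ := hσ
  rcases cs.length_simple_mul w i with h | h
  · left; exact h
  · right; omega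

lemma upW (h : Hecke cs H) (hσ : IsSimpleElt cs σ) (hxy : σ * x = y)
    (hlt : cs.length x < cs.length y) : h.TT σ * h.TT x = h.TT y := by
  obtain ⟨i, rfl⟩ := hσ; subst hxy; exact h.TT_mul_gt i x hlt

lemma downW (h : Hecke cs H) (hσ : IsSimpleElt cs σ) (hxy : σ * x = y)
    (hlt : cs.length y < cs.length x) :
    h.TT σ * h.TT x = qpar • h.TT y + (qpar - 1) • h.TT x := by
  obtain ⟨i, rfl⟩ := hσ; subst hxy; exact h.TT_mul_lt i x hlt

lemma len_two (hσ : IsSimpleElt cs σ) (hτ : IsSimpleElt cs τ) (hne : σ ≠ τ) :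
    cs.length (σ * τ) = 2 := by
  rcases hσ.len_cases τ with h | h
  · rw [hτ.len] at h; exact h
  · exfalso
    rw [hτ.len] at h
    have h0 : cs.length (σ * τ) = 0 := by omega
    exact hne (hσ.one_of_mul_eq hτ (cs.length_eq_zero_iff.mp h0))

end IsSimpleElt

lemma braid3 {s t : B} (h3 : M s t = 3) :
    cs.simple s * cs.simple t * cs.simple s = cs.simple t * cs.simple s * cs.simple t := by
  have hb := cs.wordProd_braidWord_eq s t
  have hts : M t s = 3 := by rw [M.symmetric]; exact h3
  unfold CoxeterSystem.braidWord at hb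
  rw [h3, hts] at hb
  have e1 : CoxeterSystem.alternatingWord s t 3 = [t, s, t] := rfl
  have e2 : CoxeterSystem.alternatingWord t s 3 = [s, t, s] := rfl
  rw [e1, e2] at hb
  simp only [wordProd_cons, wordProd_nil, mul_one] at hb
  rw [← mul_assoc, ← mul_assoc] at hb
  exact hb.symm

lemma comm2 {s t : B} (h2 : M s t = 2) :
    cs.simple s * cs.simple t = cs.simple t * cs.simple s := by
  have hb := cs.wordProd_braidWord_eq s t
  have hts : M t s = 2 := by rw [M.symmetric]; exact h2
  unfold CoxeterSystem.braidWord at hb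
  rw [h2, hts] at hb
  have e1 : CoxeterSystem.alternatingWord s t 2 = [s, t] := rfl
  have e2 : CoxeterSystem.alternatingWord t s 2 = [t, s] := rfl
  rw [e1, e2] at hb
  simp only [wordProd_cons, wordProd_nil, mul_one] at hb
  exact hb

lemma length_sts (h : Hecke cs H) {σ τ : W} (hσ : IsSimpleElt cs σ) (hτ : IsSimpleElt cs τ)
    (hne : σ ≠ τ) (hbr : σ * τ * σ = τ * σ * τ) :
    cs.length (σ * τ * σ) = 3 := by
  have hst : cs.length (σ * τ) = 2 := hσ.len_two hτ hne
  have hts : cs.length (τ * σ) = 2 := hτ.len_two hσ hne.symm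
  have hassoc : σ * (τ * σ) = σ * τ * σ := by rw [mul_assoc]
  rcases hσ.len_cases (τ * σ) with hup | hdn
  · rw [hassoc, hts] at hup; omega
  · exfalso
    rw [hassoc, hts] at hdn
    have h1 : cs.length (σ * τ * σ) = 1 := by omega
    obtain ⟨u, hu'⟩ := cs.length_eq_one_iff.mp h1
    obtain ⟨υ, hυ, hu⟩ : ∃ υ : W, IsSimpleElt cs υ ∧ σ * τ * σ = υ :=
      ⟨cs.simple u, ⟨u, rfl⟩, hu'⟩
    -- group identities
    have gυσ : υ * σ = σ * τ := by rw [← hu, mul_assoc, hσ.sq, mul_one]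
    have gυυ : υ * υ = 1 := hυ.sq
    have gυτσ : υ * (τ * σ) = τ := by
      rw [← hu, hbr, mul_assoc (τ * σ) τ (τ * σ), hτ.cancel, mul_assoc, hσ.sq, mul_one]
    have gστσ : σ * (τ * σ) = υ := by rw [← mul_assoc]; exact hu
    have gττσ : τ * (τ * σ) = σ := hτ.cancel σ
    have gσσ : σ * σ = 1 := hσ.sq
    -- lengths
    have lσ : cs.length σ = 1 := hσ.len
    have lτ : cs.length τ = 1 := hτ.len
    have lυ : cs.length υ = 1 := hυ.len
    have l1 : cs.length (1 : W) = 0 := cs.length_one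
    -- Hecke products
    have u1 : h.TT σ * h.TT τ = h.TT (σ * τ) := hσ.upW h rfl (by omega)
    have u2 : h.TT υ * h.TT σ = h.TT (σ * τ) := hυ.upW h gυσ (by omega)
    have d1 : h.TT τ * h.TT (τ * σ) = qpar • h.TT σ + (qpar - 1) • h.TT (τ * σ) :=
      hτ.downW h gττσ (by omega)
    have d2 : h.TT σ * h.TT σ = qpar • h.TT 1 + (qpar - 1) • h.TT σ :=
      hσ.downW h gσσ (by omega)
    have d3 : h.TT σ * h.TT (τ * σ) = qpar • h.TT υ + (qpar - 1) • h.TT (τ * σ) :=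
      hσ.downW h gστσ (by omega)
    have d4 : h.TT υ * h.TT υ = qpar • h.TT 1 + (qpar - 1) • h.TT υ :=
      hυ.downW h gυυ (by omega)
    have d5 : h.TT υ * h.TT (τ * σ) = qpar • h.TT τ + (qpar - 1) • h.TT (τ * σ) :=
      hυ.downW h gυτσ (by omega)
    -- associativity equation
    have E : h.TT σ * (h.TT τ * h.TT (τ * σ)) = h.TT υ * (h.TT σ * h.TT (τ * σ)) := by
      rw [← mul_assoc, ← mul_assoc, u1, ← u2]
    have eL : h.TT σ * (h.TT τ * h.TT (τ * σ))
        = (qpar^2) • h.TT 1 + (qpar * (qpar - 1)) • h.TT σ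
          + (qpar * (qpar - 1)) • h.TT υ + ((qpar - 1)^2) • h.TT (τ * σ) := by
      simp only [d1, mul_add, mul_smul_comm, d2, d3, smul_add, smul_smul]
      module
    have eR : h.TT υ * (h.TT σ * h.TT (τ * σ))
        = (qpar^2) • h.TT 1 + (qpar * (qpar - 1)) • h.TT υ
          + (qpar * (qpar - 1)) • h.TT τ + ((qpar - 1)^2) • h.TT (τ * σ) := by
      simp only [d3, mul_add, mul_smul_comm, d4, d5, smul_add, smul_smul]
      module
    have key := eL.symm.trans (E.trans eR)
    -- distinctness
    have n1σ : (1 : W) ≠ σ := ne_of_len cs (by omega)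
    have nυσ : υ ≠ σ := by
      intro e
      rw [e] at gυσ
      exact hne (mul_left_cancel gυσ)
    have nτσ : τ ≠ σ := hne.symm
    have nτσσ : τ * σ ≠ σ := ne_of_len cs (by omega)
    have contra := congrArg (coordH h.TT σ) key
    simp only [map_add, map_smul, coordH_basis, smul_eq_mul, if_neg n1σ, if_neg nυσ,
      if_neg nτσ, if_neg nτσσ, if_pos rfl, eq_self_iff_true, if_true, mul_one, mul_zero, add_zero, zero_add] at contra
    norm_num at contra
    rcases contra with c | c
    · exact qpar_ne_zero c
    · exact qpar_sub_one_ne_zero c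

end HeckeAux

end TLpaper

namespace TLpaper

open LaurentPolynomial CoxeterSystem
open scoped Classical

section Dihedral

variable {B W : Type} [Group W] {M : CoxeterMatrix B} (cs : CoxeterSystem M W)
variable {H : Type} [Ring H] [Algebra 𝔸 H]

lemma m2_exchange (h : Hecke cs H) {σ τ : W} (hσ : IsSimpleElt cs σ) (hτ : IsSimpleElt cs τ)
    (hne : σ ≠ τ) (hcomm : σ * τ = τ * σ) (w : W)
    (hs : cs.length w = cs.length (σ * w) + 1)
    (ht : cs.length w = cs.length (τ * w) + 1) :
    cs.length (σ * w) = cs.length (τ * (σ * w)) + 1 := by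
  rcases hτ.len_cases (σ * w) with hna | hok
  swap
  · exact hok
  exfalso
  have hst : cs.length (σ * τ) = 2 := hσ.len_two hτ hne
  have g43 : σ * (τ * w) = τ * (σ * w) := by rw [← mul_assoc, hcomm, mul_assoc]
  have ust : h.TT σ * h.TT τ = h.TT (σ * τ) := hσ.upW h rfl (by have := hτ.len; omega)
  have uts : h.TT τ * h.TT σ = h.TT (σ * τ) := hτ.upW h hcomm.symm (by have := hσ.len; omega)
  have dσw : h.TT σ * h.TT w = qpar • h.TT (σ * w) + (qpar - 1) • h.TT w :=
    hσ.downW h rfl (by omega)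
  have dτw : h.TT τ * h.TT w = qpar • h.TT (τ * w) + (qpar - 1) • h.TT w :=
    hτ.downW h rfl (by omega)
  have uτw1 : h.TT τ * h.TT (σ * w) = h.TT (τ * (σ * w)) := hτ.upW h rfl (by omega)
  have uσw2 : h.TT σ * h.TT (τ * w) = h.TT (τ * (σ * w)) := hσ.upW h g43 (by omega)
  have E : h.TT τ * (h.TT σ * h.TT w) = h.TT σ * (h.TT τ * h.TT w) := by
    rw [← mul_assoc, ← mul_assoc, uts, ← ust]
  have eL : h.TT τ * (h.TT σ * h.TT w)
      = qpar • h.TT (τ * (σ * w)) + (qpar * (qpar - 1)) • h.TT (τ * w)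
        + ((qpar - 1)^2) • h.TT w := by
    simp only [dσw, mul_add, mul_smul_comm, uτw1, dτw, smul_add, smul_smul]
    module
  have eR : h.TT σ * (h.TT τ * h.TT w)
      = qpar • h.TT (τ * (σ * w)) + (qpar * (qpar - 1)) • h.TT (σ * w)
        + ((qpar - 1)^2) • h.TT w := by
    simp only [dτw, mul_add, mul_smul_comm, uσw2, dσw, smul_add, smul_smul]
    module
  have key := eL.symm.trans (E.trans eR)
  have n31 : τ * (σ * w) ≠ τ * w := ne_of_len cs (by omega)
  have n21 : w ≠ τ * w := ne_of_len cs (by omega)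
  have n11 : σ * w ≠ τ * w := fun e => hne (mul_right_cancel e)
  have contra := congrArg (coordH h.TT (τ * w)) key
  simp only [map_add, map_smul, coordH_basis, smul_eq_mul, if_neg n31, if_neg n21,
    if_neg n11, if_pos rfl, eq_self_iff_true, if_true, mul_one, mul_zero, add_zero, zero_add] at contra
  exact q1_ne (by linear_combination contra)

lemma m3_exchange (h : Hecke cs H) {σ τ : W} (hσ : IsSimpleElt cs σ) (hτ : IsSimpleElt cs τ)
    (hne : σ ≠ τ) (hbr : σ * τ * σ = τ * σ * τ) (w : W)
    (hs : cs.length w = cs.length (σ * w) + 1)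
    (ht : cs.length w = cs.length (τ * w) + 1) :
    cs.length (σ * w) = cs.length (τ * (σ * w)) + 1 := by
  rcases hτ.len_cases (σ * w) with hna | hok
  swap
  · exact hok
  exfalso
  have hsts : cs.length (σ * τ * σ) = 3 := length_sts cs h hσ hτ hne hbr
  have hst : cs.length (σ * τ) = 2 := hσ.len_two hτ hne
  have hts : cs.length (τ * σ) = 2 := hτ.len_two hσ hne.symm
  have uts : h.TT τ * h.TT σ = h.TT (τ * σ) := hτ.upW h rfl (by have := hσ.len; omega)
  have ust : h.TT σ * h.TT τ = h.TT (σ * τ) := hσ.upW h rfl (by have := hτ.len; omega)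
  have usts : h.TT σ * h.TT (τ * σ) = h.TT (σ * τ * σ) :=
    hσ.upW h (mul_assoc σ τ σ).symm (by omega)
  have utst : h.TT τ * h.TT (σ * τ) = h.TT (σ * τ * σ) :=
    hτ.upW h (by rw [← mul_assoc, ← hbr]) (by omega)
  have TB : h.TT σ * (h.TT τ * h.TT σ) = h.TT τ * (h.TT σ * h.TT τ) := by
    rw [uts, ust, usts, utst]
  have E : h.TT σ * (h.TT τ * (h.TT σ * h.TT w))
      = h.TT τ * (h.TT σ * (h.TT τ * h.TT w)) := by
    calc h.TT σ * (h.TT τ * (h.TT σ * h.TT w))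
        = h.TT σ * (h.TT τ * h.TT σ) * h.TT w := by rw [mul_assoc, mul_assoc]
      _ = h.TT τ * (h.TT σ * h.TT τ) * h.TT w := by rw [TB]
      _ = h.TT τ * (h.TT σ * (h.TT τ * h.TT w)) := by rw [mul_assoc, mul_assoc]
  have dσw : h.TT σ * h.TT w = qpar • h.TT (σ * w) + (qpar - 1) • h.TT w :=
    hσ.downW h rfl (by omega)
  have dτw : h.TT τ * h.TT w = qpar • h.TT (τ * w) + (qpar - 1) • h.TT w :=
    hτ.downW h rfl (by omega)
  have uτw1 : h.TT τ * h.TT (σ * w) = h.TT (τ * (σ * w)) := hτ.upW h rfl (by omega)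
  have g54 : τ * (σ * (τ * w)) = σ * (τ * (σ * w)) := by
    rw [← mul_assoc, ← mul_assoc, ← hbr, mul_assoc, mul_assoc]
  have n2 : τ * w ≠ σ * w := fun e => hne.symm (mul_right_cancel e)
  have nw : w ≠ σ * w := ne_of_len cs (by omega)
  have n3 : τ * (σ * w) ≠ σ * w := ne_of_len cs (by omega)
  have n5' : σ * (τ * (σ * w)) ≠ σ * w := by
    intro e
    have e2 : τ * (σ * w) = w := mul_left_cancel e
    have e3 : τ * σ = 1 := by
      have e4 : (τ * σ) * w = 1 * w := by rw [mul_assoc, e2, one_mul]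
      exact mul_right_cancel e4
    exact hne.symm (hτ.one_of_mul_eq hσ e3)
  rcases hσ.len_cases (τ * w) with hb | hb
  · rcases hσ.len_cases (τ * (σ * w)) with hc | hc
    · -- case A
      have uσw2 : h.TT σ * h.TT (τ * w) = h.TT (σ * (τ * w)) := hσ.upW h rfl (by omega)
      have uσw3 : h.TT σ * h.TT (τ * (σ * w)) = h.TT (σ * (τ * (σ * w))) :=
        hσ.upW h rfl (by omega)
      have uτw4 : h.TT τ * h.TT (σ * (τ * w)) = h.TT (σ * (τ * (σ * w))) :=
        hτ.upW h g54 (by omega)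
      have eX : h.TT σ * (h.TT τ * (h.TT σ * h.TT w))
          = qpar • h.TT (σ * (τ * (σ * w))) + (qpar * (qpar - 1)) • h.TT (σ * (τ * w))
            + (qpar * (qpar - 1)^2) • h.TT (σ * w) + ((qpar - 1)^3) • h.TT w := by
        simp only [dσw, mul_add, mul_smul_comm, uτw1, dτw, uσw3, uσw2, smul_add, smul_smul]
        module
      have eY : h.TT τ * (h.TT σ * (h.TT τ * h.TT w))
          = qpar • h.TT (σ * (τ * (σ * w))) + (qpar * (qpar - 1)) • h.TT (τ * (σ * w))
            + (qpar * (qpar - 1)^2) • h.TT (τ * w) + ((qpar - 1)^3) • h.TT w := by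
        simp only [dτw, mul_add, mul_smul_comm, uσw2, dσw, uτw4, uτw1, smul_add, smul_smul]
        module
      have key := eX.symm.trans (E.trans eY)
      have n4 : σ * (τ * w) ≠ σ * w := ne_of_len cs (by omega)
      have contra := congrArg (coordH h.TT (σ * w)) key
      simp only [map_add, map_smul, coordH_basis, smul_eq_mul, if_neg n5', if_neg n4,
        if_neg nw, if_neg n3, if_neg n2, if_pos rfl, eq_self_iff_true, if_true, mul_one, mul_zero,
        add_zero, zero_add] at contra
      exact q2_ne (by linear_combination contra)
    · -- case B
      have uσw2 : h.TT σ * h.TT (τ * w) = h.TT (σ * (τ * w)) := hσ.upW h rfl (by omega)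
      have dσw3 : h.TT σ * h.TT (τ * (σ * w))
          = qpar • h.TT (σ * (τ * (σ * w))) + (qpar - 1) • h.TT (τ * (σ * w)) :=
        hσ.downW h rfl (by omega)
      have dτw4 : h.TT τ * h.TT (σ * (τ * w))
          = qpar • h.TT (σ * (τ * (σ * w))) + (qpar - 1) • h.TT (σ * (τ * w)) :=
        hτ.downW h g54 (by omega)
      have eX : h.TT σ * (h.TT τ * (h.TT σ * h.TT w))
          = (qpar^2) • h.TT (σ * (τ * (σ * w))) + (qpar * (qpar - 1)) • h.TT (τ * (σ * w))
            + (qpar * (qpar - 1)) • h.TT (σ * (τ * w)) + (qpar * (qpar - 1)^2) • h.TT (σ * w)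
            + ((qpar - 1)^3) • h.TT w := by
        simp only [dσw, mul_add, mul_smul_comm, uτw1, dτw, dσw3, uσw2, smul_add, smul_smul]
        module
      have eY : h.TT τ * (h.TT σ * (h.TT τ * h.TT w))
          = (qpar^2) • h.TT (σ * (τ * (σ * w))) + (qpar * (qpar - 1)) • h.TT (σ * (τ * w))
            + (qpar * (qpar - 1)) • h.TT (τ * (σ * w)) + (qpar * (qpar - 1)^2) • h.TT (τ * w)
            + ((qpar - 1)^3) • h.TT w := by
        simp only [dτw, mul_add, mul_smul_comm, uσw2, dσw, dτw4, uτw1, smul_add, smul_smul]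
        module
      have key := eX.symm.trans (E.trans eY)
      have n4 : σ * (τ * w) ≠ σ * w := ne_of_len cs (by omega)
      have contra := congrArg (coordH h.TT (σ * w)) key
      simp only [map_add, map_smul, coordH_basis, smul_eq_mul, if_neg n5', if_neg n4,
        if_neg nw, if_neg n3, if_neg n2, if_pos rfl, eq_self_iff_true, if_true, mul_one, mul_zero,
        add_zero, zero_add] at contra
      exact q2_ne (by linear_combination contra)
  · rcases hσ.len_cases (τ * (σ * w)) with hc | hc
    · -- numerically impossible
      have hd := hτ.len_cases (σ * (τ * w))
      rw [g54] at hd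
      rcases hd with hd | hd <;> omega
    · -- case C
      have dσw2 : h.TT σ * h.TT (τ * w)
          = qpar • h.TT (σ * (τ * w)) + (qpar - 1) • h.TT (τ * w) :=
        hσ.downW h rfl (by omega)
      have dσw3 : h.TT σ * h.TT (τ * (σ * w))
          = qpar • h.TT (σ * (τ * (σ * w))) + (qpar - 1) • h.TT (τ * (σ * w)) :=
        hσ.downW h rfl (by omega)
      have uτw4 : h.TT τ * h.TT (σ * (τ * w)) = h.TT (σ * (τ * (σ * w))) :=
        hτ.upW h g54 (by omega)
      have uτw2 : h.TT τ * h.TT (τ * w) = h.TT w := hτ.upW h (hτ.cancel w) (by omega)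
      have eX : h.TT σ * (h.TT τ * (h.TT σ * h.TT w))
          = (qpar^2) • h.TT (σ * (τ * (σ * w))) + (qpar * (qpar - 1)) • h.TT (τ * (σ * w))
            + (qpar^2 * (qpar - 1)) • h.TT (σ * (τ * w)) + (qpar * (qpar - 1)^2) • h.TT (τ * w)
            + (qpar * (qpar - 1)^2) • h.TT (σ * w) + ((qpar - 1)^3) • h.TT w := by
        simp only [dσw, mul_add, mul_smul_comm, uτw1, dτw, dσw3, dσw2, smul_add, smul_smul]
        module
      have eY : h.TT τ * (h.TT σ * (h.TT τ * h.TT w))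
          = (qpar^2) • h.TT (σ * (τ * (σ * w))) + (qpar * (qpar - 1)) • h.TT (τ * (σ * w))
            + (qpar * (qpar - 1)^2) • h.TT (τ * w) + (qpar * (qpar - 1)) • h.TT w
            + ((qpar - 1)^3) • h.TT w := by
        simp only [dτw, mul_add, mul_smul_comm, dσw2, dσw, uτw4, uτw2, uτw1, smul_add, smul_smul]
        module
      have key := eX.symm.trans (E.trans eY)
      have n4 : σ * (τ * w) ≠ σ * w := ne_of_len cs (by omega)
      have contra := congrArg (coordH h.TT (σ * w)) key
      simp only [map_add, map_smul, coordH_basis, smul_eq_mul, if_neg n5', if_neg n4,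
        if_neg nw, if_neg n3, if_neg n2, if_pos rfl, eq_self_iff_true, if_true, mul_one, mul_zero,
        add_zero, zero_add] at contra
      exact q2_ne (by linear_combination contra)

lemma m3_deep (h : Hecke cs H) {σ τ : W} (hσ : IsSimpleElt cs σ) (hτ : IsSimpleElt cs τ)
    (hne : σ ≠ τ) (hbr : σ * τ * σ = τ * σ * τ) (w : W)
    (hs : cs.length w = cs.length (σ * w) + 1)
    (ht : cs.length w = cs.length (τ * w) + 1) :
    cs.length (τ * (σ * w)) = cs.length (σ * (τ * (σ * w))) + 1 := by
  have ha : cs.length (σ * w) = cs.length (τ * (σ * w)) + 1 :=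
    m3_exchange cs h hσ hτ hne hbr w hs ht
  have hb : cs.length (τ * w) = cs.length (σ * (τ * w)) + 1 :=
    m3_exchange cs h hτ hσ hne.symm hbr.symm w ht hs
  rcases hσ.len_cases (τ * (σ * w)) with hc | hok
  swap
  · exact hok
  exfalso
  have hsts : cs.length (σ * τ * σ) = 3 := length_sts cs h hσ hτ hne hbr
  have hst : cs.length (σ * τ) = 2 := hσ.len_two hτ hne
  have hts : cs.length (τ * σ) = 2 := hτ.len_two hσ hne.symm
  have uts : h.TT τ * h.TT σ = h.TT (τ * σ) := hτ.upW h rfl (by have := hσ.len; omega)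
  have ust : h.TT σ * h.TT τ = h.TT (σ * τ) := hσ.upW h rfl (by have := hτ.len; omega)
  have usts : h.TT σ * h.TT (τ * σ) = h.TT (σ * τ * σ) :=
    hσ.upW h (mul_assoc σ τ σ).symm (by omega)
  have utst : h.TT τ * h.TT (σ * τ) = h.TT (σ * τ * σ) :=
    hτ.upW h (by rw [← mul_assoc, ← hbr]) (by omega)
  have TB : h.TT σ * (h.TT τ * h.TT σ) = h.TT τ * (h.TT σ * h.TT τ) := by
    rw [uts, ust, usts, utst]
  have E : h.TT σ * (h.TT τ * (h.TT σ * h.TT w))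
      = h.TT τ * (h.TT σ * (h.TT τ * h.TT w)) := by
    calc h.TT σ * (h.TT τ * (h.TT σ * h.TT w))
        = h.TT σ * (h.TT τ * h.TT σ) * h.TT w := by rw [mul_assoc, mul_assoc]
      _ = h.TT τ * (h.TT σ * h.TT τ) * h.TT w := by rw [TB]
      _ = h.TT τ * (h.TT σ * (h.TT τ * h.TT w)) := by rw [mul_assoc, mul_assoc]
  have g54 : τ * (σ * (τ * w)) = σ * (τ * (σ * w)) := by
    rw [← mul_assoc, ← mul_assoc, ← hbr, mul_assoc, mul_assoc]
  have dσw : h.TT σ * h.TT w = qpar • h.TT (σ * w) + (qpar - 1) • h.TT w :=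
    hσ.downW h rfl (by omega)
  have dτw : h.TT τ * h.TT w = qpar • h.TT (τ * w) + (qpar - 1) • h.TT w :=
    hτ.downW h rfl (by omega)
  have dτw1 : h.TT τ * h.TT (σ * w)
      = qpar • h.TT (τ * (σ * w)) + (qpar - 1) • h.TT (σ * w) :=
    hτ.downW h rfl (by omega)
  have uσw3 : h.TT σ * h.TT (τ * (σ * w)) = h.TT (σ * (τ * (σ * w))) :=
    hσ.upW h rfl (by omega)
  have uσw1 : h.TT σ * h.TT (σ * w) = h.TT w := hσ.upW h (hσ.cancel w) (by omega)
  have dσw2 : h.TT σ * h.TT (τ * w)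
      = qpar • h.TT (σ * (τ * w)) + (qpar - 1) • h.TT (τ * w) :=
    hσ.downW h rfl (by omega)
  have uτw4 : h.TT τ * h.TT (σ * (τ * w)) = h.TT (σ * (τ * (σ * w))) :=
    hτ.upW h g54 (by omega)
  have uτw2 : h.TT τ * h.TT (τ * w) = h.TT w := hτ.upW h (hτ.cancel w) (by omega)
  have eX : h.TT σ * (h.TT τ * (h.TT σ * h.TT w))
      = (qpar^2) • h.TT (σ * (τ * (σ * w))) + (qpar * (qpar - 1)) • h.TT w
        + (qpar^2 * (qpar - 1)) • h.TT (σ * (τ * w)) + (qpar * (qpar - 1)^2) • h.TT (τ * w)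
        + (qpar * (qpar - 1)^2) • h.TT (σ * w) + ((qpar - 1)^3) • h.TT w := by
    simp only [dσw, mul_add, mul_smul_comm, dτw1, dτw, uσw3, uσw1, dσw2, smul_add, smul_smul]
    module
  have eY : h.TT τ * (h.TT σ * (h.TT τ * h.TT w))
      = (qpar^2) • h.TT (σ * (τ * (σ * w))) + (qpar * (qpar - 1)) • h.TT w
        + (qpar^2 * (qpar - 1)) • h.TT (τ * (σ * w)) + (qpar * (qpar - 1)^2) • h.TT (σ * w)
        + (qpar * (qpar - 1)^2) • h.TT (τ * w) + ((qpar - 1)^3) • h.TT w := by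
    simp only [dτw, mul_add, mul_smul_comm, dσw2, dσw, uτw4, uτw2, dτw1, smul_add, smul_smul]
    module
  have key := eX.symm.trans (E.trans eY)
  -- coordinate at τ * (σ * w)
  have n53 : σ * (τ * (σ * w)) ≠ τ * (σ * w) := ne_of_len cs (by omega)
  have nw3 : w ≠ τ * (σ * w) := ne_of_len cs (by omega)
  have n43 : σ * (τ * w) ≠ τ * (σ * w) := by
    intro e
    have e2 : σ * τ = τ * σ := by
      have e4 : (σ * τ) * w = (τ * σ) * w := by rw [mul_assoc, mul_assoc, e]
      exact mul_right_cancel e4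
    have e3 : σ * τ * σ = τ := by rw [e2, mul_assoc, hσ.sq, mul_one]
    rw [e3, hτ.len] at hsts
    omega
  have n23 : τ * w ≠ τ * (σ * w) := ne_of_len cs (by omega)
  have n13 : σ * w ≠ τ * (σ * w) := ne_of_len cs (by omega)
  have contra := congrArg (coordH h.TT (τ * (σ * w))) key
  simp only [map_add, map_smul, coordH_basis, smul_eq_mul, if_neg n53, if_neg nw3,
    if_neg n43, if_neg n23, if_neg n13, if_pos rfl, eq_self_iff_true, if_true, mul_one, mul_zero,
    add_zero, zero_add] at contra
  exact q3_ne (by linear_combination -contra)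

lemma complex_of_descents (h : Hecke cs H) {s t : B} (h3 : M s t = 3)
    (hne : cs.simple s ≠ cs.simple t) (w : W)
    (hs : cs.length w = cs.length (cs.simple s * w) + 1)
    (ht : cs.length w = cs.length (cs.simple t * w) + 1) :
    IsComplex cs w := by
  have hσ : IsSimpleElt cs (cs.simple s) := ⟨s, rfl⟩
  have hτ : IsSimpleElt cs (cs.simple t) := ⟨t, rfl⟩
  have hbr := braid3 cs h3
  have hsts := length_sts cs h hσ hτ hne hbr
  have ha := m3_exchange cs h hσ hτ hne hbr w hs ht
  have hc := m3_deep cs h hσ hτ hne hbr w hs ht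
  have hwd : wD cs s t = cs.simple s * cs.simple t * cs.simple s := by
    unfold wD
    rw [h3]
    have e1 : CoxeterSystem.alternatingWord s t 3 = [t, s, t] := rfl
    rw [e1]
    simp only [wordProd_cons, wordProd_nil, mul_one]
    rw [← mul_assoc]
    exact hbr.symm
  refine ⟨s, t, 1, cs.simple s * (cs.simple t * (cs.simple s * w)), ?_, ?_, ?_⟩
  · show 3 ≤ M s t
    omega
  · rw [one_mul, hwd]
    have e : (cs.simple s * cs.simple t * cs.simple s)
        * (cs.simple s * (cs.simple t * (cs.simple s * w))) = w := by
      simp only [mul_assoc]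
      rw [hσ.cancel, hτ.cancel, hσ.cancel]
    exact e.symm
  · rw [hwd, cs.length_one, hsts]
    omega

lemma Wc_simple_mul (w : W) {σ : W} (hσ : IsSimpleElt cs σ)
    (hi : cs.length w = cs.length (σ * w) + 1) (hw : w ∈ Wc cs) : σ * w ∈ Wc cs := by
  intro hcx
  obtain ⟨s', t', x1, x2, hadj, heq, hlen⟩ := hcx
  apply hw
  rcases hσ.len_cases x1 with hup | hdn
  · refine ⟨s', t', σ * x1, x2, hadj, ?_, ?_⟩
    · rw [← hσ.cancel w, heq, ← mul_assoc, ← mul_assoc]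
    · omega
  · exfalso
    have e : w = (σ * x1) * (wD cs s' t' * x2) := by
      rw [← hσ.cancel w, heq]
      rw [← mul_assoc, ← mul_assoc, mul_assoc]
    have l1 := cs.length_mul_le (σ * x1) (wD cs s' t' * x2)
    have l2 := cs.length_mul_le (wD cs s' t') x2
    rw [← e] at l1
    omega

end Dihedral

section TLAux

variable {B W : Type} [Group W] {M : CoxeterMatrix B} (cs : CoxeterSystem M W)
variable {H : Type} [Ring H] [Algebra 𝔸 H] {TL : Type} [Ring TL] [Algebra 𝔸 TL]

lemma tElt_one (h : Hecke cs H) (tl : TLQuot cs H TL h) : tElt cs h tl 1 = 1 := by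
  unfold tElt
  rw [h.TT_one, map_one]

lemma bprod_cons (f : W → TL) (i : B) (u : List B) :
    bprod cs f (i :: u) = bgen cs f i * bprod cs f u := by
  simp [bprod]

lemma bgen_comm (h : Hecke cs H) (tl : TLQuot cs H TL h) {s t : B}
    (hne : cs.simple s ≠ cs.simple t)
    (hcomm : cs.simple s * cs.simple t = cs.simple t * cs.simple s) :
    bgen cs (tElt cs h tl) s * bgen cs (tElt cs h tl) t
      = bgen cs (tElt cs h tl) t * bgen cs (tElt cs h tl) s := by
  have hσ : IsSimpleElt cs (cs.simple s) := ⟨s, rfl⟩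
  have hτ : IsSimpleElt cs (cs.simple t) := ⟨t, rfl⟩
  have hst : cs.length (cs.simple s * cs.simple t) = 2 := hσ.len_two hτ hne
  have hTT : h.TT (cs.simple s) * h.TT (cs.simple t)
      = h.TT (cs.simple t) * h.TT (cs.simple s) := by
    rw [hσ.upW h rfl (by have := hτ.len; omega),
      hτ.upW h hcomm.symm (by have := hσ.len; omega)]
  have htc : tElt cs h tl (cs.simple s) * tElt cs h tl (cs.simple t)
      = tElt cs h tl (cs.simple t) * tElt cs h tl (cs.simple s) := by
    unfold tElt
    rw [← map_mul tl.pr, ← map_mul tl.pr, hTT]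
  unfold bgen
  rw [tElt_one]
  simp only [add_mul, mul_add, smul_mul_assoc, mul_smul_comm, smul_smul, mul_one, one_mul]
  rw [htc]
  module

end TLAux

section Main

variable {B W : Type} [Group W] {M : CoxeterMatrix B} (cs : CoxeterSystem M W)
variable {H : Type} [Ring H] [Algebra 𝔸 H] {TL : Type} [Ring TL] [Algebra 𝔸 TL]

lemma bprod_aux (h : Hecke cs H) (tl : TLQuot cs H TL h) (hsl : SimplyLaced M) :
    ∀ n : ℕ, ∀ w : W, w ∈ Wc cs → cs.length w ≤ n →
      ∀ l l' : List B, cs.IsReduced l → cs.IsReduced l' →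
      cs.wordProd l = w → cs.wordProd l' = w →
      bprod cs (tElt cs h tl) l = bprod cs (tElt cs h tl) l' := by
  intro n
  induction n with
  | zero =>
    intro w hw hlen l l' hr hr' hl hl'
    have h0 : l = [] := by
      have e : cs.length (cs.wordProd l) = l.length := hr
      rw [hl] at e
      exact List.eq_nil_of_length_eq_zero (by omega)
    have h0' : l' = [] := by
      have e : cs.length (cs.wordProd l') = l'.length := hr'
      rw [hl'] at e
      exact List.eq_nil_of_length_eq_zero (by omega)
    rw [h0, h0']
  | succ n IH =>
    intro w hw hlen l l' hr hr' hl hl'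
    rcases l with _ | ⟨s, u⟩
    · rcases l' with _ | ⟨t, u'⟩
      · rfl
      · exfalso
        have h0 : cs.length w = 0 := by rw [← hl]; simp
        have h1 : cs.length w = u'.length + 1 := by
          have e : cs.length (cs.wordProd (t :: u')) = (t :: u').length := hr'
          rw [hl'] at e
          simpa using e
        omega
    · rcases l' with _ | ⟨t, u'⟩
      · exfalso
        have h0 : cs.length w = 0 := by rw [← hl']; simp
        have h1 : cs.length w = u.length + 1 := by
          have e : cs.length (cs.wordProd (s :: u)) = (s :: u).length := hr
          rw [hl] at e
          simpa using e
        omega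
      · -- main case
        have hσ : IsSimpleElt cs (cs.simple s) := ⟨s, rfl⟩
        have hτ : IsSimpleElt cs (cs.simple t) := ⟨t, rfl⟩
        have hπu : cs.wordProd u = cs.simple s * w := by
          have e : cs.simple s * cs.wordProd u = w := by rw [← wordProd_cons]; exact hl
          rw [← e, hσ.cancel]
        have hπu' : cs.wordProd u' = cs.simple t * w := by
          have e : cs.simple t * cs.wordProd u' = w := by rw [← wordProd_cons]; exact hl'
          rw [← e, hτ.cancel]
        have hredu : cs.IsReduced u := by
          have := CoxeterSystem.IsReduced.drop (ω := s :: u) hr 1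
          simpa using this
        have hredu' : cs.IsReduced u' := by
          have := CoxeterSystem.IsReduced.drop (ω := t :: u') hr' 1
          simpa using this
        have hlw : cs.length w = u.length + 1 := by
          have e : cs.length (cs.wordProd (s :: u)) = (s :: u).length := hr
          rw [hl] at e
          simpa using e
        have hlw' : cs.length w = u'.length + 1 := by
          have e : cs.length (cs.wordProd (t :: u')) = (t :: u').length := hr'
          rw [hl'] at e
          simpa using e
        have hlu : cs.length (cs.simple s * w) = u.length := by
          rw [← hπu]; exact hredu
        have hlu' : cs.length (cs.simple t * w) = u'.length := by
          rw [← hπu']; exact hredu'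
        have hs : cs.length w = cs.length (cs.simple s * w) + 1 := by omega
        have ht : cs.length w = cs.length (cs.simple t * w) + 1 := by omega
        have hWs : cs.simple s * w ∈ Wc cs := Wc_simple_mul cs w hσ hs hw
        have hWt : cs.simple t * w ∈ Wc cs := Wc_simple_mul cs w hτ ht hw
        by_cases hcase : cs.simple s = cs.simple t
        · have e := IH (cs.simple s * w) hWs (by omega) u u' hredu hredu' hπu
            (by rw [hπu', hcase])
          rw [bprod_cons, bprod_cons, e]
          unfold bgen
          rw [hcase]
        · have hst : s ≠ t := fun e => hcase (by rw [e])
          rcases hsl s t hst with h2 | h3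
          · -- commuting case
            have hcomm := comm2 cs h2
            have hex : cs.length (cs.simple s * w)
                = cs.length (cs.simple t * (cs.simple s * w)) + 1 :=
              m2_exchange cs h hσ hτ hcase hcomm w hs ht
            obtain ⟨r, hredr, hπr⟩ :=
              cs.exists_reduced_word' (cs.simple t * (cs.simple s * w))
            have hlr : cs.length (cs.simple t * (cs.simple s * w)) = r.length := by
              rw [hπr]; exact hredr
            have hπtr : cs.wordProd (t :: r) = cs.simple s * w := by
              rw [wordProd_cons, ← hπr, hτ.cancel]
            have hredtr : cs.IsReduced (t :: r) := by
              show cs.length (cs.wordProd (t :: r)) = (t :: r).length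
              rw [hπtr]
              simp only [List.length_cons]
              omega
            have hπsr : cs.wordProd (s :: r) = cs.simple t * w := by
              rw [wordProd_cons, ← hπr, ← mul_assoc, hcomm, mul_assoc, hσ.cancel]
            have hredsr : cs.IsReduced (s :: r) := by
              show cs.length (cs.wordProd (s :: r)) = (s :: r).length
              rw [hπsr]
              simp only [List.length_cons]
              omega
            have e1 := IH (cs.simple s * w) hWs (by omega) u (t :: r) hredu hredtr hπu hπtr
            have e2 := IH (cs.simple t * w) hWt (by omega) u' (s :: r) hredu' hredsr hπu' hπsr
            rw [bprod_cons, bprod_cons, e1, e2, bprod_cons, bprod_cons,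
              ← mul_assoc, ← mul_assoc, bgen_comm cs h tl hcase hcomm]
          · -- braid case: w would be complex
            exact absurd (complex_of_descents cs h h3 hcase w hs ht) hw

end Main

end TLpaper

namespace TLpaper

/-- If `X` is simply laced and `w ∈ W_c`, then the monomial `b_{s₁} ⋯ b_{s_r}` is
independent of the choice of reduced expression `w = s₁ ⋯ s_r`. -/
theorem bprod_well_defined {B W : Type} [Group W] {M : CoxeterMatrix B} (cs : CoxeterSystem M W)
    {H : Type} [Ring H] [Algebra 𝔸 H] {TL : Type} [Ring TL] [Algebra 𝔸 TL]
    (h : Hecke cs H) (tl : TLQuot cs H TL h)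
    (hsl : SimplyLaced M) (w : W) (hw : w ∈ Wc cs)
    (l l' : List B) (hredl : cs.IsReduced l) (hredl' : cs.IsReduced l')
    (hl : cs.wordProd l = w) (hl' : cs.wordProd l' = w) :
    bprod cs (tElt cs h tl) l = bprod cs (tElt cs h tl) l' :=
  bprod_aux cs h tl hsl (cs.length w) w hw le_rfl l l' hredl hredl' hl hl'

end TLpaper
end
end
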